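/- arXiv:2602.02240 — 10 statements merged into one kernel-verified Lean document; each statement's English description precedes it below -/
import Mathlib

section
/- Assume: (consistency) for every ω ∈ Ω, α ∈ Bool and m ∈ 𝕄, if A ω = α and M ω = m then Ŷ ω = Ŷ(α, m) ω, and if A ω = α then M ω = M(α) ω; (conditional randomization, in the mean-independence form it implies) for all m ∈ 𝕄 and w ∈ 𝕎: E[Ŷ(a, m) | A = a, M = m, W = w] = E[Ŷ(a, m) | A = a, W = w], E[Ŷ(a, m) | A = a, W = w] = E[Ŷ(a, m) | W = w], and P(M(a') = m | A = a', W = w) = P(M(a') = m | W = w); (cross-world independence) for all m ∈ 𝕄 and w ∈ 𝕎: E[Ŷ(a, m) · 1{M(a') = m} | W = w] = E[Ŷ(a, m) | W = w] · P(M(a') = m | W = w). Then the observed-data identification functional equals the counterfactual mean of the derived outcome: Σ_{w ∈ 𝕎} P(W = w) · Σ_{m ∈ 𝕄} E[Ŷ | A = a, M = m, W = w] · P(M = m | A = a', W = w) = E[ω ↦ Ŷ(a, M(a')(ω))(ω)]. (Exact identification identity underlying Theorem 1.) -/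
open MeasureTheory ProbabilityTheory
open scoped ENNReal BigOperators

/-- Exact identification identity underlying Theorem 1: under consistency,
conditional randomization (in mean-independence form) and cross-world
independence, the observed-data mediation functional equals the counterfactual
mean of the derived outcome `E[Ŷ(a, M(a'))]`. -/
theorem identification_of_counterfactual_mean
    {Ω : Type*} [MeasurableSpace Ω] (P : Measure Ω) [IsProbabilityMeasure P]
    {𝕄 𝕎 : Type*} [Fintype 𝕄] [Nonempty 𝕄] [MeasurableSpace 𝕄] [MeasurableSingletonClass 𝕄]
    [Fintype 𝕎] [Nonempty 𝕎] [MeasurableSpace 𝕎] [MeasurableSingletonClass 𝕎]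
    (A : Ω → Bool) (M : Ω → 𝕄) (W : Ω → 𝕎)
    (hA : Measurable A) (hM : Measurable M) (hW : Measurable W)
    (Ypot : Bool → 𝕄 → Ω → ℝ) (Mpot : Bool → Ω → 𝕄) (Yobs : Ω → ℝ)
    (hYpot_meas : ∀ (α : Bool) (m : 𝕄), Measurable (Ypot α m))
    (hYpot_bdd : ∀ (α : Bool) (m : 𝕄), ∃ C : ℝ, ∀ ω, |Ypot α m ω| ≤ C)
    (hMpot_meas : ∀ α : Bool, Measurable (Mpot α))
    (hYobs_meas : Measurable Yobs)
    (hYobs_bdd : ∃ C : ℝ, ∀ ω, |Yobs ω| ≤ C)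
    (positivity : ∀ (α : Bool) (m : 𝕄) (w : 𝕎),
      0 < P {ω | A ω = α ∧ M ω = m ∧ W ω = w})
    (a a' : Bool)
    -- consistency
    (consistY : ∀ ω (α : Bool) (m : 𝕄), A ω = α → M ω = m → Yobs ω = Ypot α m ω)
    (consistM : ∀ ω (α : Bool), A ω = α → M ω = Mpot α ω)
    -- conditional randomization, in the mean-independence form it implies
    (mi1 : ∀ (m : 𝕄) (w : 𝕎),
      ∫ ω, Ypot a m ω ∂(P[|{ω | A ω = a ∧ M ω = m ∧ W ω = w}])
        = ∫ ω, Ypot a m ω ∂(P[|{ω | A ω = a ∧ W ω = w}]))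
    (mi2 : ∀ (m : 𝕄) (w : 𝕎),
      ∫ ω, Ypot a m ω ∂(P[|{ω | A ω = a ∧ W ω = w}])
        = ∫ ω, Ypot a m ω ∂(P[|{ω | W ω = w}]))
    (mi3 : ∀ (m : 𝕄) (w : 𝕎),
      (P[|{ω | A ω = a' ∧ W ω = w}]) {ω | Mpot a' ω = m}
        = (P[|{ω | W ω = w}]) {ω | Mpot a' ω = m})
    -- cross-world independence
    (crossWorld : ∀ (m : 𝕄) (w : 𝕎),
      ∫ ω, Ypot a m ω * ({ω | Mpot a' ω = m}.indicator (fun _ => (1 : ℝ)) ω)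
          ∂(P[|{ω | W ω = w}])
        = (∫ ω, Ypot a m ω ∂(P[|{ω | W ω = w}]))
            * ((P[|{ω | W ω = w}]) {ω | Mpot a' ω = m}).toReal) :
    ∑ w : 𝕎, (P {ω | W ω = w}).toReal *
      ∑ m : 𝕄, (∫ ω, Yobs ω ∂(P[|{ω | A ω = a ∧ M ω = m ∧ W ω = w}]))
        * ((P[|{ω | A ω = a' ∧ W ω = w}]) {ω | M ω = m}).toReal
      = ∫ ω, Ypot a (Mpot a' ω) ω ∂P := by
    classical
  -- measurable sets
  have hsW : ∀ w : 𝕎, MeasurableSet {ω | W ω = w} :=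
    fun w => hW (measurableSet_singleton w)
  have hsAW : ∀ (α : Bool) (w : 𝕎), MeasurableSet {ω | A ω = α ∧ W ω = w} :=
    fun α w => (hA (measurableSet_singleton α)).inter (hW (measurableSet_singleton w))
  have hsAMW : ∀ (α : Bool) (m : 𝕄) (w : 𝕎),
      MeasurableSet {ω | A ω = α ∧ M ω = m ∧ W ω = w} :=
    fun α m w => (hA (measurableSet_singleton α)).inter
      ((hM (measurableSet_singleton m)).inter (hW (measurableSet_singleton w)))
  have hsMp : ∀ m : 𝕄, MeasurableSet {ω | Mpot a' ω = m} :=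
    fun m => (hMpot_meas a') (measurableSet_singleton m)
  -- positivity consequences
  obtain ⟨m₀⟩ := (inferInstance : Nonempty 𝕄)
  have hposW : ∀ w : 𝕎, P {ω | W ω = w} ≠ 0 := by
    intro w
    have hsub : {ω | A ω = a ∧ M ω = m₀ ∧ W ω = w} ⊆ {ω | W ω = w} := fun ω h => h.2.2
    exact (lt_of_lt_of_le (positivity a m₀ w) (measure_mono hsub)).ne'
  -- integrability helper
  have hIntb : ∀ (μ : Measure Ω) [IsFiniteMeasure μ] (f : Ω → ℝ) (C : ℝ),
      Measurable f → (∀ ω, |f ω| ≤ C) → Integrable f μ := by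
    intro μ _ f C hf hC
    exact Integrable.mono' (integrable_const C) hf.aestronglyMeasurable
      (ae_of_all _ fun ω => by simpa [Real.norm_eq_abs] using hC ω)
  -- the summand functions
  set e : 𝕄 → Ω → ℝ :=
    fun m ω => Ypot a m ω * ({ω | Mpot a' ω = m}.indicator (fun _ => (1 : ℝ)) ω) with he
  have he_meas : ∀ m, Measurable (e m) :=
    fun m => (hYpot_meas a m).mul (measurable_const.indicator (hsMp m))
  have he_bdd : ∀ m, ∃ C, ∀ ω, |e m ω| ≤ C := by
    intro m
    obtain ⟨C, hC⟩ := hYpot_bdd a m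
    refine ⟨C, fun ω => ?_⟩
    by_cases h : ω ∈ {ω | Mpot a' ω = m}
    · simp only [he, Set.indicator_of_mem h, mul_one]; exact hC ω
    · simp only [he, Set.indicator_of_notMem h, mul_zero, abs_zero]
      exact le_trans (abs_nonneg _) (hC ω)
  have he_int : ∀ m (μ : Measure Ω) [IsFiniteMeasure μ], Integrable (e m) μ := by
    intro m μ _
    obtain ⟨C, hC⟩ := he_bdd m
    exact hIntb μ (e m) C (he_meas m) hC
  -- the counterfactual outcome as pointwise sum
  have hg_eq : ∀ ω, Ypot a (Mpot a' ω) ω = ∑ m : 𝕄, e m ω := by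
    intro ω
    rw [Finset.sum_eq_single (Mpot a' ω)]
    · have : ω ∈ {ω | Mpot a' ω = Mpot a' ω} := rfl
      simp [he, Set.indicator_of_mem this]
    · intro m _ hm
      have : ω ∉ {ω | Mpot a' ω = m} := fun h => hm (h ▸ rfl)
      simp [he, Set.indicator_of_notMem this]
    · intro h; exact absurd (Finset.mem_univ _) h
  -- key computation for each w
  have key : ∀ w : 𝕎,
      ∑ m : 𝕄, (∫ ω, Yobs ω ∂(P[|{ω | A ω = a ∧ M ω = m ∧ W ω = w}]))
        * ((P[|{ω | A ω = a' ∧ W ω = w}]) {ω | M ω = m}).toReal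
      = ∫ ω, Ypot a (Mpot a' ω) ω ∂(P[|{ω | W ω = w}]) := by
    intro w
    haveI : IsProbabilityMeasure (P[|{ω | W ω = w}]) :=
      cond_isProbabilityMeasure (hposW w)
    have step : ∀ m : 𝕄,
        (∫ ω, Yobs ω ∂(P[|{ω | A ω = a ∧ M ω = m ∧ W ω = w}]))
          * ((P[|{ω | A ω = a' ∧ W ω = w}]) {ω | M ω = m}).toReal
        = ∫ ω, e m ω ∂(P[|{ω | W ω = w}]) := by
      intro m
      -- replace Yobs by Ypot a m on the conditioning event
      have h1 : (∫ ω, Yobs ω ∂(P[|{ω | A ω = a ∧ M ω = m ∧ W ω = w}]))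
          = ∫ ω, Ypot a m ω ∂(P[|{ω | A ω = a ∧ M ω = m ∧ W ω = w}]) := by
        simp only [ProbabilityTheory.cond, integral_smul_measure]
        congr 1
        refine setIntegral_congr_fun (hsAMW a m w) fun ω hω => ?_
        exact consistY ω a m hω.1 hω.2.1
      -- replace M by Mpot a' in the conditional probability
      have h2 : (P[|{ω | A ω = a' ∧ W ω = w}]) {ω | M ω = m}
          = (P[|{ω | W ω = w}]) {ω | Mpot a' ω = m} := by
        rw [cond_apply (hsAW a' w) P]
        have hset : {ω | A ω = a' ∧ W ω = w} ∩ {ω | M ω = m}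
            = {ω | A ω = a' ∧ W ω = w} ∩ {ω | Mpot a' ω = m} := by
          ext ω
          constructor
          · rintro ⟨⟨hAω, hWω⟩, hMω⟩
            refine ⟨⟨hAω, hWω⟩, ?_⟩
            show Mpot a' ω = m
            rw [← consistM ω a' hAω]; exact hMω
          · rintro ⟨⟨hAω, hWω⟩, hMω⟩
            refine ⟨⟨hAω, hWω⟩, ?_⟩
            show M ω = m
            rw [consistM ω a' hAω]; exact hMω
        calc (P {ω | A ω = a' ∧ W ω = w})⁻¹
              * P ({ω | A ω = a' ∧ W ω = w} ∩ {ω | M ω = m})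
            = (P {ω | A ω = a' ∧ W ω = w})⁻¹
              * P ({ω | A ω = a' ∧ W ω = w} ∩ {ω | Mpot a' ω = m}) := by rw [hset]
          _ = (P[|{ω | A ω = a' ∧ W ω = w}]) {ω | Mpot a' ω = m} :=
              (cond_apply (hsAW a' w) P _).symm
          _ = (P[|{ω | W ω = w}]) {ω | Mpot a' ω = m} := mi3 m w
      rw [h1, mi1 m w, mi2 m w, h2, ← crossWorld m w]
    rw [Finset.sum_congr rfl fun m _ => step m]
    rw [← integral_finset_sum _ fun m _ => he_int m _]
    exact integral_congr_ae (ae_of_all _ fun ω => (hg_eq ω).symm)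
  -- now sum over w: law of total expectation
  have hcondint : ∀ w : 𝕎,
      (P {ω | W ω = w}).toReal * ∫ ω, Ypot a (Mpot a' ω) ω ∂(P[|{ω | W ω = w}])
      = ∫ ω in {ω | W ω = w}, Ypot a (Mpot a' ω) ω ∂P := by
    intro w
    simp only [ProbabilityTheory.cond, integral_smul_measure, ENNReal.toReal_inv,
      smul_eq_mul]
    rw [← mul_assoc, mul_inv_cancel₀, one_mul]
    exact ENNReal.toReal_ne_zero.mpr ⟨hposW w, measure_ne_top P _⟩
  have hg_int : Integrable (fun ω => Ypot a (Mpot a' ω) ω) P := by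
    have : (fun ω => Ypot a (Mpot a' ω) ω) = fun ω => ∑ m : 𝕄, e m ω :=
      funext hg_eq
    rw [this]
    exact integrable_finset_sum _ fun m _ => he_int m P
  calc ∑ w : 𝕎, (P {ω | W ω = w}).toReal *
        ∑ m : 𝕄, (∫ ω, Yobs ω ∂(P[|{ω | A ω = a ∧ M ω = m ∧ W ω = w}]))
          * ((P[|{ω | A ω = a' ∧ W ω = w}]) {ω | M ω = m}).toReal
      = ∑ w : 𝕎, ∫ ω in {ω | W ω = w}, Ypot a (Mpot a' ω) ω ∂P := by
        refine Finset.sum_congr rfl fun w _ => ?_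
        rw [key w, hcondint w]
    _ = ∫ ω, Ypot a (Mpot a' ω) ω ∂P := by
        have hpt : ∀ ω, Ypot a (Mpot a' ω) ω
            = ∑ w : 𝕎, ({ω | W ω = w}.indicator (fun ω => Ypot a (Mpot a' ω) ω)) ω := by
          intro ω
          rw [Finset.sum_eq_single (W ω)]
          · exact (Set.indicator_of_mem (show ω ∈ {ω' | W ω' = W ω} from rfl) _).symm
          · intro w _ hw
            exact Set.indicator_of_notMem
              (show ω ∉ {ω' | W ω' = w} from fun h => hw (Eq.symm h)) _
          · intro h; exact absurd (Finset.mem_univ _) h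
        have hsum : ∑ w : 𝕎, ∫ ω in {ω | W ω = w}, Ypot a (Mpot a' ω) ω ∂P
            = ∑ w : 𝕎, ∫ ω, ({ω | W ω = w}.indicator
                (fun ω => Ypot a (Mpot a' ω) ω)) ω ∂P :=
          Finset.sum_congr rfl fun w _ => (integral_indicator (hsW w)).symm
        rw [hsum, ← integral_finset_sum _ fun w _ => hg_int.indicator (hsW w)]
        exact integral_congr_ae (ae_of_all _ fun ω => (hpt ω).symm)
end

section
/- Assume: (mediator consistency) for every ω ∈ Ω, if A ω = a' then M ω = M(a') ω; and (conditional randomization of the potential mediator) P(M(a') = m | A = a', W = w) = P(M(a') = m | W = w). Then the observed mediator distribution identifies the potential mediator distribution: P(M = m | A = a', W = w) = P(M(a') = m | W = w). (Mediator proof step of Theorem 1.) -/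
open MeasureTheory ProbabilityTheory
open scoped ENNReal BigOperators

/-- Mediator proof step of Theorem 1: under mediator consistency and conditional
randomization of the potential mediator, the observed mediator distribution
identifies the potential-mediator distribution. -/
theorem observed_mediator_identifies_potential_mediator
    {Ω : Type*} [MeasurableSpace Ω] (P : Measure Ω) [IsProbabilityMeasure P]
    {𝕄 𝕎 : Type*} [Fintype 𝕄] [Nonempty 𝕄] [MeasurableSpace 𝕄] [MeasurableSingletonClass 𝕄]
    [Fintype 𝕎] [Nonempty 𝕎] [MeasurableSpace 𝕎] [MeasurableSingletonClass 𝕎]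
    (A : Ω → Bool) (M : Ω → 𝕄) (W : Ω → 𝕎)
    (hA : Measurable A) (hM : Measurable M) (hW : Measurable W)
    (Mpot : Bool → Ω → 𝕄)
    (hMpot_meas : ∀ α : Bool, Measurable (Mpot α))
    (positivity : ∀ (α : Bool) (m : 𝕄) (w : 𝕎),
      0 < P {ω | A ω = α ∧ M ω = m ∧ W ω = w})
    (a' : Bool) (m : 𝕄) (w : 𝕎)
    (consistM : ∀ ω, A ω = a' → M ω = Mpot a' ω)
    (condRandM :
      (P[|{ω | A ω = a' ∧ W ω = w}]) {ω | Mpot a' ω = m}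
        = (P[|{ω | W ω = w}]) {ω | Mpot a' ω = m}) :
    (P[|{ω | A ω = a' ∧ W ω = w}]) {ω | M ω = m}
      = (P[|{ω | W ω = w}]) {ω | Mpot a' ω = m} := by
  rw [← condRandM]
  have hs : MeasurableSet {ω | A ω = a' ∧ W ω = w} :=
    (hA (measurableSet_singleton a')).inter (hW (measurableSet_singleton w))
  have hset : {ω | A ω = a' ∧ W ω = w} ∩ {ω | M ω = m}
      = {ω | A ω = a' ∧ W ω = w} ∩ {ω | Mpot a' ω = m} := by
    ext ω
    simp only [Set.mem_inter_iff, Set.mem_setOf_eq, and_congr_right_iff]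
    rintro ⟨hAω, -⟩
    rw [consistM ω hAω]
  rw [cond_apply hs, cond_apply hs, hset]
end

section
/- Assume the cross-world factorization: for every m ∈ 𝕄, E[Ŷ(a, m) · 1{M(a') = m} | W = w] = E[Ŷ(a, m) | W = w] · P(M(a') = m | W = w). Then the counterfactual recombination identity holds: E[ω ↦ Ŷ(a, M(a')(ω))(ω) | W = w] = Σ_{m ∈ 𝕄} E[Ŷ(a, m) | W = w] · P(M(a') = m | W = w). (Cross-world recombination step of Theorem 1.) -/
open MeasureTheory ProbabilityTheory
open scoped ENNReal BigOperators

/-- Cross-world recombination step of Theorem 1: under the cross-world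
factorization, the conditional counterfactual mean of `ω ↦ Ŷ(a, M(a')(ω))(ω)`
recombines as a sum over mediator values. -/
theorem crossworld_recombination
    {Ω : Type*} [MeasurableSpace Ω] (P : Measure Ω) [IsProbabilityMeasure P]
    {𝕄 𝕎 : Type*} [Fintype 𝕄] [Nonempty 𝕄] [MeasurableSpace 𝕄] [MeasurableSingletonClass 𝕄]
    [Fintype 𝕎] [Nonempty 𝕎] [MeasurableSpace 𝕎] [MeasurableSingletonClass 𝕎]
    (A : Ω → Bool) (M : Ω → 𝕄) (W : Ω → 𝕎)
    (hA : Measurable A) (hM : Measurable M) (hW : Measurable W)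
    (Ypot : Bool → 𝕄 → Ω → ℝ) (Mpot : Bool → Ω → 𝕄)
    (hYpot_meas : ∀ (α : Bool) (m : 𝕄), Measurable (Ypot α m))
    (hYpot_bdd : ∀ (α : Bool) (m : 𝕄), ∃ C : ℝ, ∀ ω, |Ypot α m ω| ≤ C)
    (hMpot_meas : ∀ α : Bool, Measurable (Mpot α))
    (posW : ∀ w : 𝕎, 0 < P {ω | W ω = w})
    (a a' : Bool) (w : 𝕎)
    (crossWorld : ∀ m : 𝕄,
      ∫ ω, Ypot a m ω * ({ω | Mpot a' ω = m}.indicator (fun _ => (1 : ℝ)) ω)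
          ∂(P[|{ω | W ω = w}])
        = (∫ ω, Ypot a m ω ∂(P[|{ω | W ω = w}]))
            * ((P[|{ω | W ω = w}]) {ω | Mpot a' ω = m}).toReal) :
    ∫ ω, Ypot a (Mpot a' ω) ω ∂(P[|{ω | W ω = w}])
      = ∑ m : 𝕄, (∫ ω, Ypot a m ω ∂(P[|{ω | W ω = w}]))
          * ((P[|{ω | W ω = w}]) {ω | Mpot a' ω = m}).toReal := by
  set μ := P[|{ω | W ω = w}] with hμ
  have hprob : IsProbabilityMeasure μ := cond_isProbabilityMeasure (posW w).ne'
  have hkey : ∀ ω, Ypot a (Mpot a' ω) ω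
      = ∑ m : 𝕄, Ypot a m ω * ({ω | Mpot a' ω = m}.indicator (fun _ => (1 : ℝ)) ω) := by
    intro ω
    rw [Finset.sum_eq_single (Mpot a' ω)]
    · simp [Set.indicator_of_mem, Set.mem_setOf_eq]
    · intro m _ hm
      rw [Set.indicator_of_notMem (by simp [Set.mem_setOf_eq]; exact fun h => hm h.symm)]
      ring
    · simp
  have hint : ∀ m : 𝕄, Integrable
      (fun ω => Ypot a m ω * ({ω | Mpot a' ω = m}.indicator (fun _ => (1 : ℝ)) ω)) μ := by
    intro m
    obtain ⟨C, hC⟩ := hYpot_bdd a m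
    have hmeas : Measurable (fun ω => Ypot a m ω
        * ({ω | Mpot a' ω = m}.indicator (fun _ => (1 : ℝ)) ω)) :=
      (hYpot_meas a m).mul (measurable_one.indicator
        ((hMpot_meas a') (measurableSet_singleton m)))
    refine ⟨hmeas.aestronglyMeasurable, HasFiniteIntegral.of_bounded
      (C := |C|) (ae_of_all _ fun ω => ?_)⟩
    rw [Real.norm_eq_abs, abs_mul]
    calc |Ypot a m ω| * |Set.indicator {ω | Mpot a' ω = m} (fun _ => (1:ℝ)) ω|
        ≤ |C| * 1 := by
          apply mul_le_mul ((hC ω).trans (le_abs_self C)) ?_ (abs_nonneg _) (abs_nonneg _)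
          by_cases h : ω ∈ {ω | Mpot a' ω = m} <;>
            simp [Set.indicator_of_mem, Set.indicator_of_notMem, h]
      _ = |C| := mul_one _
  calc ∫ ω, Ypot a (Mpot a' ω) ω ∂μ
      = ∫ ω, ∑ m : 𝕄, Ypot a m ω
          * ({ω | Mpot a' ω = m}.indicator (fun _ => (1 : ℝ)) ω) ∂μ :=
        integral_congr_ae (Filter.Eventually.of_forall hkey)
    _ = ∑ m : 𝕄, ∫ ω, Ypot a m ω
          * ({ω | Mpot a' ω = m}.indicator (fun _ => (1 : ℝ)) ω) ∂μ :=
        integral_finset_sum _ (fun m _ => hint m)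
    _ = ∑ m : 𝕄, (∫ ω, Ypot a m ω ∂μ) * (μ {ω | Mpot a' ω = m}).toReal :=
        Finset.sum_congr rfl (fun m _ => crossWorld m)
end

section
/- At the true nuisance functions the AIPW mediation functional is exactly unbiased: E[ 1{A = a} / π_A(a | W) · r(M, W) · (Ŷ − b(M, W)) + 1{A = a'} / π_A(a' | W) · (b(M, W) − ξ(W)) + ξ(W) ] = ψ, where ψ = Σ_{w ∈ 𝕎} P(W = w) · Σ_{m ∈ 𝕄} E[Ŷ | A = a, M = m, W = w] · P(M = m | A = a', W = w). (Population unbiasedness of the AIPW estimator with true nuisances, underlying Theorem 2.) -/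
open MeasureTheory ProbabilityTheory
open scoped ENNReal BigOperators

/-- Population unbiasedness of the AIPW mediation functional at the true
nuisance functions (underlying Theorem 2). -/
theorem aipw_unbiased_at_truth
    {Ω : Type*} [MeasurableSpace Ω] (P : Measure Ω) [IsProbabilityMeasure P]
    {𝕄 𝕎 : Type*} [Fintype 𝕄] [Nonempty 𝕄] [MeasurableSpace 𝕄] [MeasurableSingletonClass 𝕄]
    [Fintype 𝕎] [Nonempty 𝕎] [MeasurableSpace 𝕎] [MeasurableSingletonClass 𝕎]
    (A : Ω → Bool) (M : Ω → 𝕄) (W : Ω → 𝕎)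
    (hA : Measurable A) (hM : Measurable M) (hW : Measurable W)
    (positivity : ∀ (α : Bool) (m : 𝕄) (w : 𝕎),
      0 < P {ω | A ω = α ∧ M ω = m ∧ W ω = w})
    (a a' : Bool)
    (Y : Ω → ℝ) (hY_meas : Measurable Y) (hY_bdd : ∃ C : ℝ, ∀ ω, |Y ω| ≤ C)
    -- true nuisance functions
    (πA : Bool → 𝕎 → ℝ)
    (hπA : ∀ (α : Bool) (w : 𝕎), πA α w = ((P[|{ω | W ω = w}]) {ω | A ω = α}).toReal)
    (πAM : Bool → 𝕄 → 𝕎 → ℝ)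
    (hπAM : ∀ (α : Bool) (m : 𝕄) (w : 𝕎),
      πAM α m w = ((P[|{ω | M ω = m ∧ W ω = w}]) {ω | A ω = α}).toReal)
    (b : 𝕄 → 𝕎 → ℝ)
    (hb : ∀ (m : 𝕄) (w : 𝕎),
      b m w = ∫ ω, Y ω ∂(P[|{ω | A ω = a ∧ M ω = m ∧ W ω = w}]))
    (ξ : 𝕎 → ℝ)
    (hξ : ∀ w : 𝕎,
      ξ w = ∑ m : 𝕄, b m w * ((P[|{ω | A ω = a' ∧ W ω = w}]) {ω | M ω = m}).toReal)
    (r : 𝕄 → 𝕎 → ℝ)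
    (hr : ∀ (m : 𝕄) (w : 𝕎),
      r m w = (πAM a' m w * πA a w) / (πAM a m w * πA a' w))
    (ψ : ℝ) (hψ : ψ = ∑ w : 𝕎, (P {ω | W ω = w}).toReal * ξ w) :
    ∫ ω,
        ((if A ω = a then (1 : ℝ) else 0) / πA a (W ω)) * r (M ω) (W ω)
            * (Y ω - b (M ω) (W ω))
          + ((if A ω = a' then (1 : ℝ) else 0) / πA a' (W ω))
            * (b (M ω) (W ω) - ξ (W ω))
          + ξ (W ω) ∂P
      = ψ := by
  classical
  obtain ⟨C, hC⟩ := hY_bdd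
  obtain ⟨E, hE⟩ : ∃ E : Bool × 𝕄 × 𝕎 → Set Ω,
      ∀ α m w, E (α, m, w) = {ω | A ω = α ∧ M ω = m ∧ W ω = w} :=
    ⟨fun p => {ω | A ω = p.1 ∧ M ω = p.2.1 ∧ W ω = p.2.2}, fun _ _ _ => rfl⟩
  have hEmeas : ∀ p, MeasurableSet (E p) := by
    rintro ⟨α, m, w⟩
    rw [hE]
    exact (hA (measurableSet_singleton α)).inter
      ((hM (measurableSet_singleton m)).inter (hW (measurableSet_singleton w)))
  have hposE : ∀ p, 0 < P (E p) := by
    rintro ⟨α, m, w⟩; rw [hE]; exact positivity α m w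
  have hfin : ∀ s : Set Ω, P s ≠ ∞ := fun s => measure_ne_top P s
  have hqpos : ∀ p, 0 < (P (E p)).toReal :=
    fun p => ENNReal.toReal_pos (hposE p).ne' (hfin _)
  have hYint : Integrable Y P :=
    (integrable_const C).mono' hY_meas.aestronglyMeasurable (Filter.Eventually.of_forall hC)
  obtain ⟨u, hu⟩ : ∃ u : Bool × 𝕄 × 𝕎 → ℝ, ∀ α m w,
      u (α, m, w) = (if α = a then (1 : ℝ) else 0) / πA a w * r m w :=
    ⟨fun p => (if p.1 = a then (1 : ℝ) else 0) / πA a p.2.2 * r p.2.1 p.2.2, fun _ _ _ => rfl⟩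
  obtain ⟨v, hv⟩ : ∃ v : Bool × 𝕄 × 𝕎 → ℝ, ∀ α m w,
      v (α, m, w) = -((if α = a then (1 : ℝ) else 0) / πA a w * r m w * b m w)
        + (if α = a' then (1 : ℝ) else 0) / πA a' w * (b m w - ξ w) + ξ w :=
    ⟨fun p => -((if p.1 = a then (1 : ℝ) else 0) / πA a p.2.2 * r p.2.1 p.2.2 * b p.2.1 p.2.2)
        + (if p.1 = a' then (1 : ℝ) else 0) / πA a' p.2.2 * (b p.2.1 p.2.2 - ξ p.2.2) + ξ p.2.2,
      fun _ _ _ => rfl⟩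
  -- pointwise representation as a finite sum of indicators
  have hrepr : ∀ ω,
      ((if A ω = a then (1 : ℝ) else 0) / πA a (W ω)) * r (M ω) (W ω)
            * (Y ω - b (M ω) (W ω))
          + ((if A ω = a' then (1 : ℝ) else 0) / πA a' (W ω))
            * (b (M ω) (W ω) - ξ (W ω))
          + ξ (W ω)
        = ∑ p : Bool × 𝕄 × 𝕎, (E p).indicator (fun ω' => u p * Y ω' + v p) ω := by
    intro ω
    have hmem : ω ∈ E (A ω, M ω, W ω) := by rw [hE]; exact ⟨rfl, rfl, rfl⟩
    rw [Finset.sum_eq_single (A ω, M ω, W ω)]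
    · rw [Set.indicator_of_mem hmem, hu, hv]; ring
    · rintro ⟨α, m, w⟩ - hne
      refine Set.indicator_of_notMem (fun hmemp => hne ?_) _
      rw [hE] at hmemp
      obtain ⟨h1, h2, h3⟩ := hmemp
      rw [h1, h2, h3]
    · exact fun h => absurd (Finset.mem_univ _) h
  have hint : ∀ p, Integrable ((E p).indicator fun ω => u p * Y ω + v p) P :=
    fun p => ((hYint.const_mul (u p)).add (integrable_const (v p))).indicator (hEmeas p)
  -- the conditional mean property of b
  have hb' : ∀ m w, ∫ ω in E (a, m, w), Y ω ∂P = (P (E (a, m, w))).toReal * b m w := by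
    intro m w
    have h1 : b m w = ((P (E (a, m, w))).toReal)⁻¹ * ∫ ω in E (a, m, w), Y ω ∂P := by
      rw [hb m w, ← hE a m w]
      simp only [ProbabilityTheory.cond, integral_smul_measure, ENNReal.toReal_inv, smul_eq_mul]
    rw [h1, ← mul_assoc, mul_inv_cancel₀ (hqpos (a, m, w)).ne', one_mul]
  -- measurable sets
  have hWmeas : ∀ w, MeasurableSet {ω | W ω = w} := fun w => hW (measurableSet_singleton w)
  have hSmeas : ∀ w, MeasurableSet {ω | A ω = a' ∧ W ω = w} := fun w =>
    (hA (measurableSet_singleton a')).inter (hW (measurableSet_singleton w))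
  -- positivity of marginal/joint events
  have hposS : ∀ w, 0 < (P {ω | A ω = a' ∧ W ω = w}).toReal := by
    intro w
    refine ENNReal.toReal_pos ((positivity a' (Classical.arbitrary 𝕄) w).trans_le
      (measure_mono ?_)).ne' (hfin _)
    intro ω h
    simp only [Set.mem_setOf_eq] at h ⊢
    exact ⟨h.1, h.2.2⟩
  have hposW : ∀ w, 0 < (P {ω | W ω = w}).toReal := by
    intro w
    refine ENNReal.toReal_pos ((positivity a' (Classical.arbitrary 𝕄) w).trans_le
      (measure_mono ?_)).ne' (hfin _)
    intro ω h
    simp only [Set.mem_setOf_eq] at h ⊢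
    exact h.2.2
  -- explicit formula for πA a'
  have hπ' : ∀ w, πA a' w
      = (P {ω | A ω = a' ∧ W ω = w}).toReal / (P {ω | W ω = w}).toReal := by
    intro w
    rw [hπA a' w, cond_apply (hWmeas w)]
    have hinter : {ω | W ω = w} ∩ {ω | A ω = a'} = {ω | A ω = a' ∧ W ω = w} := by
      ext ω
      simp only [Set.mem_inter_iff, Set.mem_setOf_eq]
      exact ⟨fun h => ⟨h.2, h.1⟩, fun h => ⟨h.2, h.1⟩⟩
    rw [hinter, ENNReal.toReal_mul, ENNReal.toReal_inv, inv_mul_eq_div]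
  have hπpos : ∀ w, 0 < πA a' w := fun w => by
    rw [hπ']; exact div_pos (hposS w) (hposW w)
  -- conditional mediator probabilities
  have hMcond : ∀ m w, ((P[|{ω | A ω = a' ∧ W ω = w}]) {ω | M ω = m}).toReal
      = (P (E (a', m, w))).toReal / (P {ω | A ω = a' ∧ W ω = w}).toReal := by
    intro m w
    rw [cond_apply (hSmeas w)]
    have hinter : {ω | A ω = a' ∧ W ω = w} ∩ {ω | M ω = m} = E (a', m, w) := by
      rw [hE]; ext ω
      exact ⟨fun h => ⟨h.1.1, h.2, h.1.2⟩, fun h => ⟨⟨h.1, h.2.2⟩, h.2.1⟩⟩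
    rw [hinter, ENNReal.toReal_mul, ENNReal.toReal_inv, inv_mul_eq_div]
  -- slice sums
  have hSsum : ∀ w, (P {ω | A ω = a' ∧ W ω = w}).toReal
      = ∑ m : 𝕄, (P (E (a', m, w))).toReal := by
    intro w
    have hset : {ω | A ω = a' ∧ W ω = w} = ⋃ m, E (a', m, w) := by
      ext ω
      simp only [Set.mem_iUnion, hE, Set.mem_setOf_eq]
      exact ⟨fun h => ⟨M ω, h.1, rfl, h.2⟩, fun ⟨m, h1, _, h3⟩ => ⟨h1, h3⟩⟩
    have hd : Pairwise (Function.onFun Disjoint fun m => E (a', m, w)) := by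
      intro m m' hne
      rw [Function.onFun, Set.disjoint_left]
      intro ω h h'
      rw [hE] at h h'
      exact hne (h.2.1.symm.trans h'.2.1)
    rw [hset, measure_iUnion hd fun m => hEmeas _, tsum_fintype,
      ENNReal.toReal_sum fun m _ => hfin _]
  have hWsum : ∀ w, (∑ α : Bool, ∑ m : 𝕄, (P (E (α, m, w))).toReal)
      = (P {ω | W ω = w}).toReal := by
    intro w
    have hset : {ω | W ω = w} = ⋃ p : Bool × 𝕄, E (p.1, p.2, w) := by
      ext ω
      simp only [Set.mem_iUnion, hE, Set.mem_setOf_eq]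
      exact ⟨fun h => ⟨(A ω, M ω), rfl, rfl, h⟩, fun ⟨p, _, _, h3⟩ => h3⟩
    have hd : Pairwise (Function.onFun Disjoint fun p : Bool × 𝕄 => E (p.1, p.2, w)) := by
      rintro ⟨α, m⟩ ⟨α', m'⟩ hne
      rw [Function.onFun, Set.disjoint_left]
      intro ω h h'
      rw [hE] at h h'
      exact hne (by rw [Prod.mk.injEq]
                    exact ⟨h.1.symm.trans h'.1, h.2.1.symm.trans h'.2.1⟩)
    rw [hset, measure_iUnion hd fun p => hEmeas _, tsum_fintype,
      ENNReal.toReal_sum fun p _ => hfin _, Fintype.sum_prod_type]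
  have hsum1 : ∀ w, (∑ m : 𝕄, ((P[|{ω | A ω = a' ∧ W ω = w}]) {ω | M ω = m}).toReal) = 1 := by
    intro w
    simp only [hMcond]
    rw [← Finset.sum_div, ← hSsum w, div_self (hposS w).ne']
  -- key identity relating weights
  have hBkey : ∀ m w, (P (E (a', m, w))).toReal / πA a' w
      = (P {ω | W ω = w}).toReal * ((P[|{ω | A ω = a' ∧ W ω = w}]) {ω | M ω = m}).toReal := by
    intro m w
    rw [hMcond, hπ']
    rw [div_div_eq_mul_div, mul_comm, mul_div_assoc]
  -- per-atom value of the integral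
  have hterm : ∀ p : Bool × 𝕄 × 𝕎,
      u p * (∫ ω in E p, Y ω ∂P) + v p * (P (E p)).toReal
        = (if p.1 = a' then (b p.2.1 p.2.2 - ξ p.2.2) * (P (E p)).toReal / πA a' p.2.2 else 0)
          + ξ p.2.2 * (P (E p)).toReal := by
    rintro ⟨α, m, w⟩
    rw [hu, hv]
    by_cases hα : α = a
    · subst hα
      rw [hb' m w]
      by_cases hα' : α = a'
      · simp only [if_pos rfl, if_pos hα']; ring
      · simp only [if_pos rfl, if_neg hα']; ring
    · by_cases hα' : α = a'
      · simp only [if_neg hα, if_pos hα']; ring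
      · simp only [if_neg hα, if_neg hα']; ring
  -- the correction term sums to zero
  have hB : (∑ p : Bool × 𝕄 × 𝕎,
      if p.1 = a' then (b p.2.1 p.2.2 - ξ p.2.2) * (P (E p)).toReal / πA a' p.2.2 else 0) = 0 := by
    rw [Fintype.sum_prod_type]
    have step : ∀ α : Bool, (∑ q : 𝕄 × 𝕎,
        if α = a' then (b q.1 q.2 - ξ q.2) * (P (E (α, q.1, q.2))).toReal / πA a' q.2 else 0)
        = if α = a' then (∑ q : 𝕄 × 𝕎,
            (b q.1 q.2 - ξ q.2) * (P (E (α, q.1, q.2))).toReal / πA a' q.2) else 0 := by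
      intro α; split_ifs <;> simp
    simp only [step, Finset.sum_ite_eq' Finset.univ a', Finset.mem_univ, if_pos]
    rw [Fintype.sum_prod_type, Finset.sum_comm]
    refine Finset.sum_eq_zero fun w _ => ?_
    have expand : ∀ m : 𝕄, (b m w - ξ w) * (P (E (a', m, w))).toReal / πA a' w
        = (P {ω | W ω = w}).toReal
            * (b m w * ((P[|{ω | A ω = a' ∧ W ω = w}]) {ω | M ω = m}).toReal)
          - ((P {ω | W ω = w}).toReal * ξ w)
            * ((P[|{ω | A ω = a' ∧ W ω = w}]) {ω | M ω = m}).toReal := by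
      intro m
      rw [mul_div_assoc, hBkey m w]
      ring
    simp only [expand]
    rw [Finset.sum_sub_distrib, ← Finset.mul_sum, ← Finset.mul_sum, ← hξ w, hsum1 w]
    ring
  -- the baseline term sums to ψ
  have hCsum : (∑ p : Bool × 𝕄 × 𝕎, ξ p.2.2 * (P (E p)).toReal) = ψ := by
    rw [hψ, Fintype.sum_prod_type]
    simp only [Fintype.sum_prod_type]
    have step : ∀ α : Bool, (∑ m : 𝕄, ∑ w : 𝕎, ξ w * (P (E (α, m, w))).toReal)
        = ∑ w : 𝕎, ∑ m : 𝕄, ξ w * (P (E (α, m, w))).toReal := fun α => by rw [Finset.sum_comm]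
    simp only [step]
    rw [Finset.sum_comm]
    refine Finset.sum_congr rfl fun w _ => ?_
    simp only [← Finset.mul_sum]
    rw [hWsum w, mul_comm]
  -- assemble
  calc
    ∫ ω,
        ((if A ω = a then (1 : ℝ) else 0) / πA a (W ω)) * r (M ω) (W ω)
            * (Y ω - b (M ω) (W ω))
          + ((if A ω = a' then (1 : ℝ) else 0) / πA a' (W ω))
            * (b (M ω) (W ω) - ξ (W ω))
          + ξ (W ω) ∂P
      = ∫ ω, (∑ p : Bool × 𝕄 × 𝕎, (E p).indicator (fun ω' => u p * Y ω' + v p) ω) ∂P :=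
        integral_congr_ae (Filter.Eventually.of_forall hrepr)
    _ = ∑ p : Bool × 𝕄 × 𝕎, ∫ ω, (E p).indicator (fun ω' => u p * Y ω' + v p) ω ∂P :=
        integral_finset_sum _ fun p _ => hint p
    _ = ∑ p : Bool × 𝕄 × 𝕎, (u p * (∫ ω in E p, Y ω ∂P) + v p * (P (E p)).toReal) := by
        refine Finset.sum_congr rfl fun p _ => ?_
        rw [integral_indicator (hEmeas p),
          integral_add ((hYint.const_mul (u p)).integrableOn) ((integrable_const (v p)).integrableOn),
          integral_const_mul, setIntegral_const, smul_eq_mul, measureReal_def, mul_comm ((P (E p)).toReal)]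
    _ = ∑ p : Bool × 𝕄 × 𝕎,
          ((if p.1 = a' then (b p.2.1 p.2.2 - ξ p.2.2) * (P (E p)).toReal / πA a' p.2.2 else 0)
            + ξ p.2.2 * (P (E p)).toReal) :=
        Finset.sum_congr rfl fun p _ => hterm p
    _ = ψ := by rw [Finset.sum_add_distrib, hB, zero_add, hCsum]
end

section
/- For every function h : 𝕄 × 𝕎 → ℝ, the mediational weighting identity holds: E[ 1{A = a} / π_A(a | W) · r(M, W) · h(M, W) ] = E[ 1{A = a'} / π_A(a' | W) · h(M, W) ] = Σ_{w ∈ 𝕎} P(W = w) · Σ_{m ∈ 𝕄} P(M = m | A = a', W = w) · h(m, w). That is, reweighting the treated (A = a) observations by the odds ratio r(M, W) reproduces expectations under the mediator distribution conditional on A = a'. -/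
open MeasureTheory ProbabilityTheory
open scoped ENNReal BigOperators

/-- Mediational weighting identity: reweighting the `A = a` observations by the
odds ratio `r(M, W)` reproduces expectations under the mediator distribution
conditional on `A = a'`. -/
theorem mediational_weighting_identity
    {Ω : Type*} [MeasurableSpace Ω] (P : Measure Ω) [IsProbabilityMeasure P]
    {𝕄 𝕎 : Type*} [Fintype 𝕄] [Nonempty 𝕄] [MeasurableSpace 𝕄] [MeasurableSingletonClass 𝕄]
    [Fintype 𝕎] [Nonempty 𝕎] [MeasurableSpace 𝕎] [MeasurableSingletonClass 𝕎]
    (A : Ω → Bool) (M : Ω → 𝕄) (W : Ω → 𝕎)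
    (hA : Measurable A) (hM : Measurable M) (hW : Measurable W)
    (positivity : ∀ (α : Bool) (m : 𝕄) (w : 𝕎),
      0 < P {ω | A ω = α ∧ M ω = m ∧ W ω = w})
    (a a' : Bool)
    (πA : Bool → 𝕎 → ℝ)
    (hπA : ∀ (α : Bool) (w : 𝕎), πA α w = ((P[|{ω | W ω = w}]) {ω | A ω = α}).toReal)
    (πAM : Bool → 𝕄 → 𝕎 → ℝ)
    (hπAM : ∀ (α : Bool) (m : 𝕄) (w : 𝕎),
      πAM α m w = ((P[|{ω | M ω = m ∧ W ω = w}]) {ω | A ω = α}).toReal)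
    (r : 𝕄 → 𝕎 → ℝ)
    (hr : ∀ (m : 𝕄) (w : 𝕎),
      r m w = (πAM a' m w * πA a w) / (πAM a m w * πA a' w)) :
    ∀ h : 𝕄 × 𝕎 → ℝ,
      (∫ ω, ((if A ω = a then (1 : ℝ) else 0) / πA a (W ω)) * r (M ω) (W ω)
          * h (M ω, W ω) ∂P
        = ∫ ω, ((if A ω = a' then (1 : ℝ) else 0) / πA a' (W ω)) * h (M ω, W ω) ∂P)
      ∧
      (∫ ω, ((if A ω = a' then (1 : ℝ) else 0) / πA a' (W ω)) * h (M ω, W ω) ∂P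
        = ∑ w : 𝕎, (P {ω | W ω = w}).toReal
            * ∑ m : 𝕄, ((P[|{ω | A ω = a' ∧ W ω = w}]) {ω | M ω = m}).toReal
                * h (m, w)) := by
  intro h
  classical
  -- measurable sets
  have mA : ∀ α : Bool, MeasurableSet {ω | A ω = α} := fun α => hA (measurableSet_singleton α)
  have mM : ∀ m : 𝕄, MeasurableSet {ω | M ω = m} := fun m => hM (measurableSet_singleton m)
  have mW : ∀ w : 𝕎, MeasurableSet {ω | W ω = w} := fun w => hW (measurableSet_singleton w)
  have mMW : ∀ (m : 𝕄) (w : 𝕎), MeasurableSet {ω | M ω = m ∧ W ω = w} := fun m w => (mM m).inter (mW w)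
  have mAW : ∀ (α : Bool) (w : 𝕎), MeasurableSet {ω | A ω = α ∧ W ω = w} := fun α w => (mA α).inter (mW w)
  -- abbreviations
  set p : Bool → 𝕄 → 𝕎 → ℝ := fun α m w => (P {ω | A ω = α ∧ M ω = m ∧ W ω = w}).toReal with hp_def
  set q : 𝕄 → 𝕎 → ℝ := fun m w => (P {ω | M ω = m ∧ W ω = w}).toReal with hq_def
  set pa : Bool → 𝕎 → ℝ := fun α w => (P {ω | A ω = α ∧ W ω = w}).toReal with hpa_def
  set pw : 𝕎 → ℝ := fun w => (P {ω | W ω = w}).toReal with hpw_def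
  have hp : ∀ α m w, 0 < p α m w := fun α m w =>
    ENNReal.toReal_pos (positivity α m w).ne' (measure_ne_top P _)
  have hq : ∀ m w, 0 < q m w := fun m w =>
    ENNReal.toReal_pos ((positivity true m w).trans_le
      (measure_mono (show {ω | A ω = true ∧ M ω = m ∧ W ω = w} ⊆ {ω | M ω = m ∧ W ω = w}
        from fun ω hω => ⟨hω.2.1, hω.2.2⟩))).ne' (measure_ne_top P _)
  have hpa : ∀ α w, 0 < pa α w := fun α w =>
    ENNReal.toReal_pos ((positivity α (Classical.arbitrary 𝕄) w).trans_le
      (measure_mono (show {ω | A ω = α ∧ M ω = Classical.arbitrary 𝕄 ∧ W ω = w}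
          ⊆ {ω | A ω = α ∧ W ω = w}
        from fun ω hω => ⟨hω.1, hω.2.2⟩))).ne' (measure_ne_top P _)
  have hpw : ∀ w, 0 < pw w := fun w =>
    ENNReal.toReal_pos ((positivity true (Classical.arbitrary 𝕄) w).trans_le
      (measure_mono (show {ω | A ω = true ∧ M ω = Classical.arbitrary 𝕄 ∧ W ω = w}
          ⊆ {ω | W ω = w}
        from fun ω hω => hω.2.2))).ne' (measure_ne_top P _)
  -- conditional probabilities as ratios
  have hπA' : ∀ α w, πA α w = pa α w / pw w := by
    intro α w
    rw [hπA, cond_apply (mW w), ENNReal.toReal_mul, ENNReal.toReal_inv]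
    have : {ω | W ω = w} ∩ {ω | A ω = α} = {ω | A ω = α ∧ W ω = w} := by
      ext ω; simp [Set.mem_inter_iff, and_comm]
    rw [this, inv_mul_eq_div]
  have hπAM' : ∀ α m w, πAM α m w = p α m w / q m w := by
    intro α m w
    rw [hπAM, cond_apply (mMW m w), ENNReal.toReal_mul, ENNReal.toReal_inv]
    have : {ω | M ω = m ∧ W ω = w} ∩ {ω | A ω = α} = {ω | A ω = α ∧ M ω = m ∧ W ω = w} := by
      ext ω; simp [Set.mem_inter_iff]; tauto
    rw [this, inv_mul_eq_div]
  have hcond : ∀ m w, ((P[|{ω | A ω = a' ∧ W ω = w}]) {ω | M ω = m}).toReal = p a' m w / pa a' w := by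
    intro m w
    rw [cond_apply (mAW a' w), ENNReal.toReal_mul, ENNReal.toReal_inv]
    have : {ω | A ω = a' ∧ W ω = w} ∩ {ω | M ω = m} = {ω | A ω = a' ∧ M ω = m ∧ W ω = w} := by
      ext ω; simp [Set.mem_inter_iff]; tauto
    rw [this, inv_mul_eq_div]
  -- integral as a finite sum
  have key : ∀ g : Bool → 𝕄 → 𝕎 → ℝ,
      ∫ ω, g (A ω) (M ω) (W ω) ∂P
        = ∑ α : Bool, ∑ m : 𝕄, ∑ w : 𝕎, p α m w * g α m w := by
    intro g
    have hT : Measurable (fun ω => (A ω, M ω, W ω)) := hA.prodMk (hM.prodMk hW)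
    have h1 : ∫ ω, g (A ω) (M ω) (W ω) ∂P
        = ∫ x : Bool × 𝕄 × 𝕎, g x.1 x.2.1 x.2.2 ∂(P.map (fun ω => (A ω, M ω, W ω))) := by
      rw [integral_map hT.aemeasurable
        (measurable_of_countable _).aestronglyMeasurable]
    rw [h1, integral_fintype Integrable.of_finite, Fintype.sum_prod_type]
    refine Finset.sum_congr rfl fun α _ => ?_
    rw [Fintype.sum_prod_type]
    refine Finset.sum_congr rfl fun m _ => Finset.sum_congr rfl fun w _ => ?_
    rw [measureReal_def, Measure.map_apply hT (measurableSet_singleton _)]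
    have : (fun ω => (A ω, M ω, W ω)) ⁻¹' {(α, m, w)} = {ω | A ω = α ∧ M ω = m ∧ W ω = w} := by
      ext ω; simp [Prod.ext_iff]
    rw [this]
    simp [smul_eq_mul, hp_def]
  -- reduce both integrals to sums over m, w
  have int1 : ∫ ω, ((if A ω = a then (1 : ℝ) else 0) / πA a (W ω)) * r (M ω) (W ω) * h (M ω, W ω) ∂P
      = ∑ m : 𝕄, ∑ w : 𝕎, p a m w * ((1 / πA a w) * r m w * h (m, w)) := by
    rw [key (fun α m w => ((if α = a then (1 : ℝ) else 0) / πA a w) * r m w * h (m, w))]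
    rw [Finset.sum_eq_single a (fun b _ hb => by simp [hb]) (by simp)]
    simp
  have int2 : ∫ ω, ((if A ω = a' then (1 : ℝ) else 0) / πA a' (W ω)) * h (M ω, W ω) ∂P
      = ∑ m : 𝕄, ∑ w : 𝕎, p a' m w * ((1 / πA a' w) * h (m, w)) := by
    rw [key (fun α m w => ((if α = a' then (1 : ℝ) else 0) / πA a' w) * h (m, w))]
    rw [Finset.sum_eq_single a' (fun b _ hb => by simp [hb]) (by simp)]
    simp
  constructor
  · rw [int1, int2]
    refine Finset.sum_congr rfl fun m _ => Finset.sum_congr rfl fun w _ => ?_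
    rw [hr, hπA', hπA', hπAM', hπAM']
    have h1 := (hp a m w).ne'
    have h2 := (hp a' m w).ne'
    have h3 := (hq m w).ne'
    have h4 := (hpa a w).ne'
    have h5 := (hpa a' w).ne'
    have h6 := (hpw w).ne'
    field_simp
  · rw [int2, Finset.sum_comm]
    refine Finset.sum_congr rfl fun w _ => ?_
    rw [Finset.mul_sum]
    refine Finset.sum_congr rfl fun m _ => ?_
    rw [hcond, hπA']
    have h2 := (hp a' m w).ne'
    have h5 := (hpa a' w).ne'
    have h6 := (hpw w).ne'
    field_simp
    ring
end

section
/- The population bias of the AIPW mediation functional at estimated nuisances is exactly a sum of products of nuisance errors: Ψ(π̂, b̂, ξ̂) − ψ = E[ 1{A = a} / π̂₀(W) · (r̂(M, W) − r(M, W)) · (b(M, W) − b̂(M, W)) ] + E[ (1{A = a} / π̂₀(W) − 1{A = a} / π_A(a | W)) · r(M, W) · (b(M, W) − b̂(M, W)) ] + E[ (1{A = a'} / π̂₁(W) − 1{A = a'} / π_A(a' | W)) · (κ_b̂(W) − ξ̂(W)) ]. (Exact second-order remainder identity underlying Theorem 2 and Corollary 1; each term is a product of an error in the propensity-type component and an error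 in the outcome-regression-type component.) -/
open MeasureTheory ProbabilityTheory
open scoped ENNReal BigOperators

lemma aipw_master {Ω : Type*} [MeasurableSpace Ω] (P : Measure Ω) [IsFiniteMeasure P]
    {𝕄 𝕎 : Type*} [Fintype 𝕄] [MeasurableSpace 𝕄] [MeasurableSingletonClass 𝕄]
    [Fintype 𝕎] [MeasurableSpace 𝕎] [MeasurableSingletonClass 𝕎]
    (A : Ω → Bool) (M : Ω → 𝕄) (W : Ω → 𝕎)
    (hA : Measurable A) (hM : Measurable M) (hW : Measurable W)
    (Y : Ω → ℝ) (hY : Integrable Y P)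
    (g h : Bool → 𝕄 → 𝕎 → ℝ) :
    ∫ ω, (g (A ω) (M ω) (W ω) * Y ω + h (A ω) (M ω) (W ω)) ∂P
      = ∑ w : 𝕎, ∑ m : 𝕄, ∑ α : Bool,
          (g α m w * (∫ ω in {ω | A ω = α ∧ M ω = m ∧ W ω = w}, Y ω ∂P)
            + h α m w * (P {ω | A ω = α ∧ M ω = m ∧ W ω = w}).toReal) := by
  classical
  set X : Ω → 𝕎 × 𝕄 × Bool := fun ω => (W ω, M ω, A ω) with hXdef
  have hX : Measurable X := hW.prodMk (hM.prodMk hA)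
  have hcell : ∀ t : 𝕎 × 𝕄 × Bool,
      X ⁻¹' {t} = {ω | A ω = t.2.2 ∧ M ω = t.2.1 ∧ W ω = t.1} := by
    intro t; ext ω; simp [hXdef, Prod.ext_iff]; tauto
  have hcellm : ∀ t : 𝕎 × 𝕄 × Bool, MeasurableSet (X ⁻¹' {t}) :=
    fun t => hX (measurableSet_singleton t)
  have hdisj : Pairwise (Function.onFun Disjoint fun t : 𝕎 × 𝕄 × Bool => X ⁻¹' {t}) := by
    intro s t hst
    exact Set.disjoint_left.2 fun ω hs ht => hst (hs.symm.trans ht)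
  have hcover : (⋃ t : 𝕎 × 𝕄 × Bool, X ⁻¹' {t}) = Set.univ := by
    ext ω; simp
  -- measurability & boundedness of composed functions
  have hgm : Measurable (fun ω => g (A ω) (M ω) (W ω)) := by
    have : Measurable (fun t : 𝕎 × 𝕄 × Bool => g t.2.2 t.2.1 t.1) :=
      measurable_of_countable _
    exact this.comp hX
  have hhm : Measurable (fun ω => h (A ω) (M ω) (W ω)) := by
    have : Measurable (fun t : 𝕎 × 𝕄 × Bool => h t.2.2 t.2.1 t.1) :=
      measurable_of_countable _
    exact this.comp hX
  have hgbdd : ∃ C, ∀ ω, ‖g (A ω) (M ω) (W ω)‖ ≤ C := by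
    refine ⟨∑ t : 𝕎 × 𝕄 × Bool, ‖g t.2.2 t.2.1 t.1‖, fun ω => ?_⟩
    exact Finset.single_le_sum (f := fun t : 𝕎 × 𝕄 × Bool => ‖g t.2.2 t.2.1 t.1‖)
      (fun t _ => norm_nonneg _) (Finset.mem_univ (X ω))
  have hint1 : Integrable (fun ω => g (A ω) (M ω) (W ω) * Y ω) P :=
    hY.bdd_mul hgm.aestronglyMeasurable (Filter.Eventually.of_forall hgbdd.choose_spec)
  have hint2 : Integrable (fun ω => h (A ω) (M ω) (W ω)) P := by
    have := (integrable_const (1 : ℝ) (μ := P)).bdd_mul hhm.aestronglyMeasurable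
      (c := ∑ t : 𝕎 × 𝕄 × Bool, ‖h t.2.2 t.2.1 t.1‖) (Filter.Eventually.of_forall fun ω =>
        Finset.single_le_sum (f := fun t : 𝕎 × 𝕄 × Bool => ‖h t.2.2 t.2.1 t.1‖)
          (fun t _ => norm_nonneg _) (Finset.mem_univ (X ω)))
    simpa using this
  have hint : Integrable (fun ω => g (A ω) (M ω) (W ω) * Y ω + h (A ω) (M ω) (W ω)) P :=
    hint1.add hint2
  have key : ∫ ω, (g (A ω) (M ω) (W ω) * Y ω + h (A ω) (M ω) (W ω)) ∂P
      = ∑ t : 𝕎 × 𝕄 × Bool, ∫ ω in X ⁻¹' {t},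
          (g (A ω) (M ω) (W ω) * Y ω + h (A ω) (M ω) (W ω)) ∂P := by
    rw [← setIntegral_univ, ← hcover]
    exact integral_iUnion_fintype hcellm hdisj (fun t => hint.integrableOn)
  rw [key, Fintype.sum_prod_type]
  refine Finset.sum_congr rfl fun w _ => ?_
  rw [Fintype.sum_prod_type]
  refine Finset.sum_congr rfl fun m _ => Finset.sum_congr rfl fun α _ => ?_
  have hset : X ⁻¹' {(w, m, α)} = {ω | A ω = α ∧ M ω = m ∧ W ω = w} := hcell (w, m, α)
  rw [hset]
  have hms : MeasurableSet {ω | A ω = α ∧ M ω = m ∧ W ω = w} := by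
    have := hcellm (w, m, α); rwa [hset] at this
  have hcongr : ∫ ω in {ω | A ω = α ∧ M ω = m ∧ W ω = w},
      (g (A ω) (M ω) (W ω) * Y ω + h (A ω) (M ω) (W ω)) ∂P
      = ∫ ω in {ω | A ω = α ∧ M ω = m ∧ W ω = w}, (g α m w * Y ω + h α m w) ∂P := by
    refine setIntegral_congr_fun hms fun ω hω => ?_
    obtain ⟨h1, h2, h3⟩ := hω
    simp only [h1, h2, h3]
  rw [hcongr, integral_add ((hY.integrableOn).const_mul _)
    (integrableOn_const (measure_ne_top P _)),
    MeasureTheory.integral_const_mul, setIntegral_const, smul_eq_mul,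
    measureReal_def, mul_comm ((P _).toReal)]


lemma sum_bool_collapse (a a' : Bool) (G H1 H2 C : ℝ) (u v : Bool → ℝ) :
    (∑ α : Bool, ((if α = a then (1:ℝ) else 0) * G * u α
      + ((if α = a then (1:ℝ) else 0) * H1 + (if α = a' then (1:ℝ) else 0) * H2 + C) * v α))
    = G * u a + H1 * v a + H2 * v a' + C * (v true + v false) := by
  cases a <;> cases a' <;> simp [Fintype.sum_bool] <;> ring

lemma sum_bool_collapse2 (c : Bool) (H : ℝ) (u v : Bool → ℝ) :
    (∑ α : Bool, ((0:ℝ) * u α + (if α = c then (1:ℝ) else 0) * H * v α)) = H * v c := by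
  cases c <;> simp [Fintype.sum_bool] <;> ring

set_option maxHeartbeats 1000000 in
/-- Exact second-order remainder identity underlying Theorem 2 and Corollary 1:
the population bias of the AIPW mediation functional at estimated nuisances is
exactly a sum of products of nuisance errors. -/
theorem aipw_second_order_remainder
    {Ω : Type*} [MeasurableSpace Ω] (P : Measure Ω) [IsProbabilityMeasure P]
    {𝕄 𝕎 : Type*} [Fintype 𝕄] [Nonempty 𝕄] [MeasurableSpace 𝕄] [MeasurableSingletonClass 𝕄]
    [Fintype 𝕎] [Nonempty 𝕎] [MeasurableSpace 𝕎] [MeasurableSingletonClass 𝕎]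
    (A : Ω → Bool) (M : Ω → 𝕄) (W : Ω → 𝕎)
    (hA : Measurable A) (hM : Measurable M) (hW : Measurable W)
    (positivity : ∀ (α : Bool) (m : 𝕄) (w : 𝕎),
      0 < P {ω | A ω = α ∧ M ω = m ∧ W ω = w})
    (a a' : Bool)
    (Y : Ω → ℝ) (hY_meas : Measurable Y) (hY_bdd : ∃ C : ℝ, ∀ ω, |Y ω| ≤ C)
    -- true nuisance functions
    (πA : Bool → 𝕎 → ℝ)
    (hπA : ∀ (α : Bool) (w : 𝕎), πA α w = ((P[|{ω | W ω = w}]) {ω | A ω = α}).toReal)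
    (πAM : Bool → 𝕄 → 𝕎 → ℝ)
    (hπAM : ∀ (α : Bool) (m : 𝕄) (w : 𝕎),
      πAM α m w = ((P[|{ω | M ω = m ∧ W ω = w}]) {ω | A ω = α}).toReal)
    (b : 𝕄 → 𝕎 → ℝ)
    (hb : ∀ (m : 𝕄) (w : 𝕎),
      b m w = ∫ ω, Y ω ∂(P[|{ω | A ω = a ∧ M ω = m ∧ W ω = w}]))
    (ξ : 𝕎 → ℝ)
    (hξ : ∀ w : 𝕎,
      ξ w = ∑ m : 𝕄, b m w * ((P[|{ω | A ω = a' ∧ W ω = w}]) {ω | M ω = m}).toReal)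
    (r : 𝕄 → 𝕎 → ℝ)
    (hr : ∀ (m : 𝕄) (w : 𝕎),
      r m w = (πAM a' m w * πA a w) / (πAM a m w * πA a' w))
    (ψ : ℝ) (hψ : ψ = ∑ w : 𝕎, (P {ω | W ω = w}).toReal * ξ w)
    -- estimated nuisance functions
    (πhat₀ πhat₁ : 𝕎 → ℝ)
    (hπhat₀ : ∀ w : 𝕎, πhat₀ w ∈ Set.Ioo (0 : ℝ) 1)
    (hπhat₁ : ∀ w : 𝕎, πhat₁ w ∈ Set.Ioo (0 : ℝ) 1)
    (πMhat₀ πMhat₁ : 𝕄 → 𝕎 → ℝ)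
    (hπMhat₀ : ∀ (m : 𝕄) (w : 𝕎), πMhat₀ m w ∈ Set.Ioo (0 : ℝ) 1)
    (hπMhat₁ : ∀ (m : 𝕄) (w : 𝕎), πMhat₁ m w ∈ Set.Ioo (0 : ℝ) 1)
    (bhat : 𝕄 → 𝕎 → ℝ) (ξhat : 𝕎 → ℝ)
    (rhat : 𝕄 → 𝕎 → ℝ)
    (hrhat : ∀ (m : 𝕄) (w : 𝕎),
      rhat m w = (πMhat₁ m w * πhat₀ w) / (πMhat₀ m w * πhat₁ w))
    (κ : 𝕎 → ℝ)
    (hκ : ∀ w : 𝕎,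
      κ w = ∑ m : 𝕄, bhat m w * ((P[|{ω | A ω = a' ∧ W ω = w}]) {ω | M ω = m}).toReal)
    (Ψhat : ℝ)
    (hΨhat : Ψhat = ∫ ω,
        ((if A ω = a then (1 : ℝ) else 0) / πhat₀ (W ω)) * rhat (M ω) (W ω)
            * (Y ω - bhat (M ω) (W ω))
          + ((if A ω = a' then (1 : ℝ) else 0) / πhat₁ (W ω))
            * (bhat (M ω) (W ω) - ξhat (W ω))
          + ξhat (W ω) ∂P) :
    Ψhat - ψ
      = (∫ ω, ((if A ω = a then (1 : ℝ) else 0) / πhat₀ (W ω))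
            * (rhat (M ω) (W ω) - r (M ω) (W ω))
            * (b (M ω) (W ω) - bhat (M ω) (W ω)) ∂P)
        + (∫ ω, ((if A ω = a then (1 : ℝ) else 0) / πhat₀ (W ω)
              - (if A ω = a then (1 : ℝ) else 0) / πA a (W ω))
            * r (M ω) (W ω)
            * (b (M ω) (W ω) - bhat (M ω) (W ω)) ∂P)
        + (∫ ω, ((if A ω = a' then (1 : ℝ) else 0) / πhat₁ (W ω)
              - (if A ω = a' then (1 : ℝ) else 0) / πA a' (W ω))
            * (κ (W ω) - ξhat (W ω)) ∂P) := by
  classical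
  -- basic integrability
  obtain ⟨C, hC⟩ := hY_bdd
  have hY : Integrable Y P :=
    Integrable.mono' (integrable_const C) hY_meas.aestronglyMeasurable
      (Filter.Eventually.of_forall fun ω => by simpa [Real.norm_eq_abs] using hC ω)
  -- abbreviations
  set p : Bool → 𝕄 → 𝕎 → ℝ :=
    fun α m w => (P {ω | A ω = α ∧ M ω = m ∧ W ω = w}).toReal with hp
  set yint : Bool → 𝕄 → 𝕎 → ℝ :=
    fun α m w => ∫ ω in {ω | A ω = α ∧ M ω = m ∧ W ω = w}, Y ω ∂P with hyint
  set pA : Bool → 𝕎 → ℝ := fun α w => ∑ m : 𝕄, p α m w with hpA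
  set q : 𝕎 → ℝ := fun w => ∑ m : 𝕄, ∑ α : Bool, p α m w with hq
  have hp_pos : ∀ α m w, 0 < p α m w := fun α m w =>
    ENNReal.toReal_pos (positivity α m w).ne' (measure_ne_top _ _)
  have hpA_pos : ∀ α w, 0 < pA α w := fun α w =>
    Finset.sum_pos (fun m _ => hp_pos α m w) Finset.univ_nonempty
  have hq_pos : ∀ w, 0 < q w := fun w =>
    Finset.sum_pos (fun m _ => Finset.sum_pos (fun α _ => hp_pos α m w) Finset.univ_nonempty)
      Finset.univ_nonempty
  have hP0 : ∀ w, πhat₀ w ≠ 0 := fun w => ne_of_gt (hπhat₀ w).1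
  have hP1 : ∀ w, πhat₁ w ≠ 0 := fun w => ne_of_gt (hπhat₁ w).1
  have msW : ∀ w : 𝕎, MeasurableSet {ω | W ω = w} := fun w => hW (measurableSet_singleton w)
  have msA : ∀ α : Bool, MeasurableSet {ω | A ω = α} := fun α => hA (measurableSet_singleton α)
  have msM : ∀ m : 𝕄, MeasurableSet {ω | M ω = m} := fun m => hM (measurableSet_singleton m)
  have msAW : ∀ (α : Bool) (w : 𝕎), MeasurableSet {ω | A ω = α ∧ W ω = w} :=
    fun α w => (msA α).inter (msW w)
  have msMW : ∀ (m : 𝕄) (w : 𝕎), MeasurableSet {ω | M ω = m ∧ W ω = w} :=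
    fun m w => (msM m).inter (msW w)
  -- measure partition facts, proved via the master lemma
  have fq : ∀ w₀ : 𝕎, (P {ω | W ω = w₀}).toReal = q w₀ := by
    intro w₀
    have h2 : ∫ ω, ((0:ℝ) * Y ω + (if W ω = w₀ then 1 else 0)) ∂P
        = (P {ω | W ω = w₀}).toReal := by
      rw [show (fun ω => (0:ℝ) * Y ω + (if W ω = w₀ then 1 else 0))
          = Set.indicator {ω | W ω = w₀} (fun _ => (1:ℝ)) from
        funext fun ω => by by_cases h : W ω = w₀ <;>
          simp [Set.indicator_apply, h, Set.mem_setOf_eq]]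
      exact integral_indicator_one (hW (measurableSet_singleton w₀))
    have h1 : (P {ω | W ω = w₀}).toReal
        = ∑ w : 𝕎, ∑ m : 𝕄, ∑ α : Bool,
            ((0:ℝ) * yint α m w + (if w = w₀ then 1 else 0) * p α m w) := by
      rw [← h2]
      exact aipw_master P A M W hA hM hW Y hY (fun _ _ _ => 0)
        (fun _ _ w => if w = w₀ then 1 else 0)
    rw [h1, Finset.sum_eq_single w₀]
    · simp [hq, Fintype.sum_bool]
    · intro w _ hw; simp [hw]
    · intro h; exact absurd (Finset.mem_univ w₀) h
  have fA : ∀ (α₀ : Bool) (w₀ : 𝕎), (P {ω | A ω = α₀ ∧ W ω = w₀}).toReal = pA α₀ w₀ := by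
    intro α₀ w₀
    have h2 : ∫ ω, ((0:ℝ) * Y ω + (if A ω = α₀ then 1 else 0) * (if W ω = w₀ then 1 else 0)) ∂P
        = (P {ω | A ω = α₀ ∧ W ω = w₀}).toReal := by
      rw [show (fun ω => (0:ℝ) * Y ω + (if A ω = α₀ then 1 else 0) * (if W ω = w₀ then 1 else 0))
          = Set.indicator {ω | A ω = α₀ ∧ W ω = w₀} (fun _ => (1:ℝ)) from
        funext fun ω => by by_cases h1 : A ω = α₀ <;> by_cases h : W ω = w₀ <;>
          simp [Set.indicator_apply, h1, h, Set.mem_setOf_eq]]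
      exact integral_indicator_one
        ((hA (measurableSet_singleton α₀)).inter (hW (measurableSet_singleton w₀)))
    have h1 : (P {ω | A ω = α₀ ∧ W ω = w₀}).toReal
        = ∑ w : 𝕎, ∑ m : 𝕄, ∑ α : Bool,
            ((0:ℝ) * yint α m w + (if α = α₀ then 1 else 0) * (if w = w₀ then 1 else 0) * p α m w) := by
      rw [← h2]
      exact aipw_master P A M W hA hM hW Y hY (fun _ _ _ => 0)
        (fun α _ w => (if α = α₀ then 1 else 0) * (if w = w₀ then 1 else 0))
    rw [h1, Finset.sum_eq_single w₀]
    · simp [Finset.sum_ite_eq', hpA]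
    · intro w _ hw; simp [hw]
    · intro h; exact absurd (Finset.mem_univ w₀) h
  have fM : ∀ (m₀ : 𝕄) (w₀ : 𝕎),
      (P {ω | M ω = m₀ ∧ W ω = w₀}).toReal = ∑ α : Bool, p α m₀ w₀ := by
    intro m₀ w₀
    have h2 : ∫ ω, ((0:ℝ) * Y ω + (if M ω = m₀ then 1 else 0) * (if W ω = w₀ then 1 else 0)) ∂P
        = (P {ω | M ω = m₀ ∧ W ω = w₀}).toReal := by
      rw [show (fun ω => (0:ℝ) * Y ω + (if M ω = m₀ then 1 else 0) * (if W ω = w₀ then 1 else 0))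
          = Set.indicator {ω | M ω = m₀ ∧ W ω = w₀} (fun _ => (1:ℝ)) from
        funext fun ω => by by_cases h1 : M ω = m₀ <;> by_cases h : W ω = w₀ <;>
          simp [Set.indicator_apply, h1, h, Set.mem_setOf_eq]]
      exact integral_indicator_one
        ((hM (measurableSet_singleton m₀)).inter (hW (measurableSet_singleton w₀)))
    have h1 : (P {ω | M ω = m₀ ∧ W ω = w₀}).toReal
        = ∑ w : 𝕎, ∑ m : 𝕄, ∑ α : Bool,
            ((0:ℝ) * yint α m w + (if m = m₀ then 1 else 0) * (if w = w₀ then 1 else 0) * p α m w) := by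
      rw [← h2]
      exact aipw_master P A M W hA hM hW Y hY (fun _ _ _ => 0)
        (fun _ m w => (if m = m₀ then 1 else 0) * (if w = w₀ then 1 else 0))
    rw [h1, Finset.sum_eq_single w₀]
    · simp [Finset.sum_ite_eq']
    · intro w _ hw; simp [hw]
    · intro h; exact absurd (Finset.mem_univ w₀) h
  have hpM_pos : ∀ m w, 0 < ∑ α : Bool, p α m w := fun m w =>
    Finset.sum_pos (fun α _ => hp_pos α m w) Finset.univ_nonempty
  -- conditional probability conversions
  have hπA_eq : ∀ (α : Bool) (w : 𝕎), πA α w = pA α w / q w := by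
    intro α w
    rw [hπA, cond_apply (msW w) P,
      show {ω | W ω = w} ∩ {ω | A ω = α} = {ω | A ω = α ∧ W ω = w} by ext ω; simp; tauto,
      ENNReal.toReal_mul, ENNReal.toReal_inv, fq, fA, inv_mul_eq_div]
  have hπAM_eq : ∀ (α : Bool) (m : 𝕄) (w : 𝕎),
      πAM α m w = p α m w / ∑ α' : Bool, p α' m w := by
    intro α m w
    rw [hπAM, cond_apply (msMW m w) P,
      show {ω | M ω = m ∧ W ω = w} ∩ {ω | A ω = α} = {ω | A ω = α ∧ M ω = m ∧ W ω = w} by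
        ext ω; simp; tauto,
      ENNReal.toReal_mul, ENNReal.toReal_inv, fM, inv_mul_eq_div]
  have hcondM : ∀ (m : 𝕄) (w : 𝕎),
      ((P[|{ω | A ω = a' ∧ W ω = w}]) {ω | M ω = m}).toReal = p a' m w / pA a' w := by
    intro m w
    rw [cond_apply (msAW a' w) P,
      show {ω | A ω = a' ∧ W ω = w} ∩ {ω | M ω = m} = {ω | A ω = a' ∧ M ω = m ∧ W ω = w} by
        ext ω; simp; tauto,
      ENNReal.toReal_mul, ENNReal.toReal_inv, fA, inv_mul_eq_div]
  have hb_eq : ∀ (m : 𝕄) (w : 𝕎), b m w = yint a m w / p a m w := by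
    intro m w
    rw [hb, ProbabilityTheory.cond, integral_smul_measure, ENNReal.toReal_inv, smul_eq_mul,
      inv_mul_eq_div]
  have hybp : ∀ (m : 𝕄) (w : 𝕎), yint a m w = b m w * p a m w := by
    intro m w
    rw [hb_eq m w, div_mul_cancel₀]
    exact (hp_pos a m w).ne'
  have hr_eq : ∀ (m : 𝕄) (w : 𝕎),
      r m w = (p a' m w * pA a w) / (p a m w * pA a' w) := by
    intro m w
    rw [hr, hπAM_eq, hπAM_eq, hπA_eq, hπA_eq]
    field_simp
    rw [div_eq_div_iff (mul_pos (mul_pos (mul_pos (hpM_pos m w) (hq_pos w)) (hp_pos a m w))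
      (hpA_pos a' w)).ne' (mul_pos (hp_pos a m w) (hpA_pos a' w)).ne']
    ring
  have hξ' : ∀ w, ξ w = ∑ m : 𝕄, b m w * (p a' m w / pA a' w) := by
    intro w
    rw [hξ]
    exact Finset.sum_congr rfl fun m _ => by rw [hcondM]
  have hκ' : ∀ w, κ w = ∑ m : 𝕄, bhat m w * (p a' m w / pA a' w) := by
    intro w
    rw [hκ]
    exact Finset.sum_congr rfl fun m _ => by rw [hcondM]
  have hbsum : ∀ w, ∑ m : 𝕄, b m w * p a' m w = ξ w * pA a' w := by
    intro w
    rw [hξ', Finset.sum_mul]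
    exact Finset.sum_congr rfl fun m _ => by
      field_simp [(hpA_pos a' w).ne']
  have hbhatsum : ∀ w, ∑ m : 𝕄, bhat m w * p a' m w = κ w * pA a' w := by
    intro w
    rw [hκ', Finset.sum_mul]
    exact Finset.sum_congr rfl fun m _ => by
      field_simp [(hpA_pos a' w).ne']

  -- convert the four integrals to sums via the master lemma
  have hΨ2 : Ψhat = ∑ w : 𝕎, ∑ m : 𝕄, ∑ α : Bool,
      ((if α = a then (1:ℝ) else 0) * (rhat m w / πhat₀ w) * yint α m w
        + ((if α = a then (1:ℝ) else 0) * (-(rhat m w / πhat₀ w) * bhat m w)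
            + (if α = a' then (1:ℝ) else 0) * ((bhat m w - ξhat w) / πhat₁ w)
            + ξhat w) * p α m w) := by
    have ePsi : (fun ω => ((if A ω = a then (1 : ℝ) else 0) / πhat₀ (W ω)) * rhat (M ω) (W ω)
            * (Y ω - bhat (M ω) (W ω))
          + ((if A ω = a' then (1 : ℝ) else 0) / πhat₁ (W ω))
            * (bhat (M ω) (W ω) - ξhat (W ω))
          + ξhat (W ω))
        = (fun ω => (if A ω = a then (1:ℝ) else 0) * (rhat (M ω) (W ω) / πhat₀ (W ω)) * Y ω
          + ((if A ω = a then (1:ℝ) else 0) * (-(rhat (M ω) (W ω) / πhat₀ (W ω)) * bhat (M ω) (W ω))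
            + (if A ω = a' then (1:ℝ) else 0) * ((bhat (M ω) (W ω) - ξhat (W ω)) / πhat₁ (W ω))
            + ξhat (W ω))) := funext fun ω => by ring
    rw [hΨhat, ePsi]
    exact aipw_master P A M W hA hM hW Y hY
      (fun α m w => (if α = a then (1:ℝ) else 0) * (rhat m w / πhat₀ w))
      (fun α m w => (if α = a then (1:ℝ) else 0) * (-(rhat m w / πhat₀ w) * bhat m w)
        + (if α = a' then (1:ℝ) else 0) * ((bhat m w - ξhat w) / πhat₁ w) + ξhat w)
  have hI1 : (∫ ω, ((if A ω = a then (1 : ℝ) else 0) / πhat₀ (W ω))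
            * (rhat (M ω) (W ω) - r (M ω) (W ω))
            * (b (M ω) (W ω) - bhat (M ω) (W ω)) ∂P)
      = ∑ w : 𝕎, ∑ m : 𝕄, ∑ α : Bool,
          ((0:ℝ) * yint α m w + (if α = a then (1:ℝ) else 0)
            * ((rhat m w - r m w) * (b m w - bhat m w) / πhat₀ w) * p α m w) := by
    have f1 : (fun ω => ((if A ω = a then (1 : ℝ) else 0) / πhat₀ (W ω))
            * (rhat (M ω) (W ω) - r (M ω) (W ω))
            * (b (M ω) (W ω) - bhat (M ω) (W ω)))
        = (fun ω => (0:ℝ) * Y ω + (if A ω = a then (1:ℝ) else 0)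
            * ((rhat (M ω) (W ω) - r (M ω) (W ω)) * (b (M ω) (W ω) - bhat (M ω) (W ω))
                / πhat₀ (W ω))) := funext fun ω => by ring
    rw [f1]
    exact aipw_master P A M W hA hM hW Y hY (fun _ _ _ => 0)
      (fun α m w => (if α = a then (1:ℝ) else 0)
        * ((rhat m w - r m w) * (b m w - bhat m w) / πhat₀ w))
  have hI2 : (∫ ω, ((if A ω = a then (1 : ℝ) else 0) / πhat₀ (W ω)
              - (if A ω = a then (1 : ℝ) else 0) / πA a (W ω))
            * r (M ω) (W ω)
            * (b (M ω) (W ω) - bhat (M ω) (W ω)) ∂P)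
      = ∑ w : 𝕎, ∑ m : 𝕄, ∑ α : Bool,
          ((0:ℝ) * yint α m w + (if α = a then (1:ℝ) else 0)
            * ((1 / πhat₀ w - 1 / πA a w) * r m w * (b m w - bhat m w)) * p α m w) := by
    have f2 : (fun ω => ((if A ω = a then (1 : ℝ) else 0) / πhat₀ (W ω)
              - (if A ω = a then (1 : ℝ) else 0) / πA a (W ω))
            * r (M ω) (W ω)
            * (b (M ω) (W ω) - bhat (M ω) (W ω)))
        = (fun ω => (0:ℝ) * Y ω + (if A ω = a then (1:ℝ) else 0)
            * ((1 / πhat₀ (W ω) - 1 / πA a (W ω)) * r (M ω) (W ω)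
                * (b (M ω) (W ω) - bhat (M ω) (W ω)))) := funext fun ω => by ring
    rw [f2]
    exact aipw_master P A M W hA hM hW Y hY (fun _ _ _ => 0)
      (fun α m w => (if α = a then (1:ℝ) else 0)
        * ((1 / πhat₀ w - 1 / πA a w) * r m w * (b m w - bhat m w)))
  have hI3 : (∫ ω, ((if A ω = a' then (1 : ℝ) else 0) / πhat₁ (W ω)
              - (if A ω = a' then (1 : ℝ) else 0) / πA a' (W ω))
            * (κ (W ω) - ξhat (W ω)) ∂P)
      = ∑ w : 𝕎, ∑ m : 𝕄, ∑ α : Bool,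
          ((0:ℝ) * yint α m w + (if α = a' then (1:ℝ) else 0)
            * ((1 / πhat₁ w - 1 / πA a' w) * (κ w - ξhat w)) * p α m w) := by
    have f3 : (fun ω => ((if A ω = a' then (1 : ℝ) else 0) / πhat₁ (W ω)
              - (if A ω = a' then (1 : ℝ) else 0) / πA a' (W ω))
            * (κ (W ω) - ξhat (W ω)))
        = (fun ω => (0:ℝ) * Y ω + (if A ω = a' then (1:ℝ) else 0)
            * ((1 / πhat₁ (W ω) - 1 / πA a' (W ω)) * (κ (W ω) - ξhat (W ω)))) :=
      funext fun ω => by ring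
    rw [f3]
    exact aipw_master P A M W hA hM hW Y hY (fun _ _ _ => 0)
      (fun α m w => (if α = a' then (1:ℝ) else 0)
        * ((1 / πhat₁ w - 1 / πA a' w) * (κ w - ξhat w)))
  -- assemble
  rw [hψ]
  simp only [fq]
  rw [hΨ2, hI1, hI2, hI3]
  simp only [sum_bool_collapse, sum_bool_collapse2]
  rw [← Finset.sum_sub_distrib, ← Finset.sum_add_distrib, ← Finset.sum_add_distrib]
  refine Finset.sum_congr rfl fun w _ => ?_
  have key : ∑ m : 𝕄,
      ((rhat m w / πhat₀ w * yint a m w + -(rhat m w / πhat₀ w) * bhat m w * p a m w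
        + (bhat m w - ξhat w) / πhat₁ w * p a' m w + ξhat w * (p true m w + p false m w))
       - (rhat m w - r m w) * (b m w - bhat m w) / πhat₀ w * p a m w
       - (1 / πhat₀ w - 1 / πA a w) * r m w * (b m w - bhat m w) * p a m w
       - (1 / πhat₁ w - 1 / πA a' w) * (κ w - ξhat w) * p a' m w)
     = q w * ξ w := by
    have step1 : ∑ m : 𝕄,
        ((rhat m w / πhat₀ w * yint a m w + -(rhat m w / πhat₀ w) * bhat m w * p a m w
          + (bhat m w - ξhat w) / πhat₁ w * p a' m w + ξhat w * (p true m w + p false m w))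
         - (rhat m w - r m w) * (b m w - bhat m w) / πhat₀ w * p a m w
         - (1 / πhat₀ w - 1 / πA a w) * r m w * (b m w - bhat m w) * p a m w
         - (1 / πhat₁ w - 1 / πA a' w) * (κ w - ξhat w) * p a' m w)
        = ∑ m : 𝕄, (q w / pA a' w * (b m w * p a' m w)
            + (1 / πhat₁ w - q w / pA a' w) * (bhat m w * p a' m w)
            + (-(ξhat w / πhat₁ w) - (1 / πhat₁ w - q w / pA a' w) * (κ w - ξhat w)) * p a' m w
            + ξhat w * (p true m w + p false m w)) := by
      refine Finset.sum_congr rfl fun m _ => ?_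
      rw [hybp m w, hr_eq m w, hπA_eq a w, hπA_eq a' w]
      have h1 : p a m w ≠ 0 := (hp_pos a m w).ne'
      have h2 : pA a w ≠ 0 := (hpA_pos a w).ne'
      have h3 : pA a' w ≠ 0 := (hpA_pos a' w).ne'
      have h4 : q w ≠ 0 := (hq_pos w).ne'
      have h5 : πhat₀ w ≠ 0 := hP0 w
      have h6 : πhat₁ w ≠ 0 := hP1 w
      clear_value p pA q
      field_simp
      ring
    rw [step1]
    have hqw : (∑ m : 𝕄, p true m w + ∑ m : 𝕄, p false m w) = q w := by
      rw [← Finset.sum_add_distrib]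
      exact Finset.sum_congr rfl fun m _ => (Fintype.sum_bool fun α => p α m w).symm
    simp only [Finset.sum_add_distrib, ← Finset.mul_sum]
    rw [hbsum w, hbhatsum w, show (∑ m : 𝕄, p a' m w) = pA a' w from rfl, hqw]
    have h3 : pA a' w ≠ 0 := (hpA_pos a' w).ne'
    have h4 : q w ≠ 0 := (hq_pos w).ne'
    have h6 : πhat₁ w ≠ 0 := hP1 w
    clear_value p pA q
    field_simp
    ring
  rw [Finset.sum_sub_distrib, Finset.sum_sub_distrib, Finset.sum_sub_distrib] at key
  linarith [key]
end

section
/- Robustness to misspecified outcome models: if the propensity components are correct, i.e. π̂₀(w) = π_A(a | w), π̂₁(w) = π_A(a' | w) for all w ∈ 𝕎 and π̂ᴹ₀(m, w) = π_A(a | m, w), π̂ᴹ₁(m, w) = π_A(a' | m, w) for all m ∈ 𝕄, w ∈ 𝕎, then for arbitrary b̂ : 𝕄 × 𝕎 → ℝ and ξ̂ : 𝕎 → ℝ the AIPW functional is exactly unbiased: Ψ(π̂, b̂, ξ̂) = ψ. (Population version of Corollary 1, case (i).) -/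
open MeasureTheory ProbabilityTheory
open scoped ENNReal BigOperators

/-- Population version of Corollary 1, case (i): if the propensity components
are correct, the AIPW functional is exactly unbiased for arbitrary outcome
models `b̂` and `ξ̂`. -/
theorem aipw_robust_to_outcome_models
    {Ω : Type*} [MeasurableSpace Ω] (P : Measure Ω) [IsProbabilityMeasure P]
    {𝕄 𝕎 : Type*} [Fintype 𝕄] [Nonempty 𝕄] [MeasurableSpace 𝕄] [MeasurableSingletonClass 𝕄]
    [Fintype 𝕎] [Nonempty 𝕎] [MeasurableSpace 𝕎] [MeasurableSingletonClass 𝕎]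
    (A : Ω → Bool) (M : Ω → 𝕄) (W : Ω → 𝕎)
    (hA : Measurable A) (hM : Measurable M) (hW : Measurable W)
    (positivity : ∀ (α : Bool) (m : 𝕄) (w : 𝕎),
      0 < P {ω | A ω = α ∧ M ω = m ∧ W ω = w})
    (a a' : Bool)
    (Y : Ω → ℝ) (hY_meas : Measurable Y) (hY_bdd : ∃ C : ℝ, ∀ ω, |Y ω| ≤ C)
    (πA : Bool → 𝕎 → ℝ)
    (hπA : ∀ (α : Bool) (w : 𝕎), πA α w = ((P[|{ω | W ω = w}]) {ω | A ω = α}).toReal)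
    (πAM : Bool → 𝕄 → 𝕎 → ℝ)
    (hπAM : ∀ (α : Bool) (m : 𝕄) (w : 𝕎),
      πAM α m w = ((P[|{ω | M ω = m ∧ W ω = w}]) {ω | A ω = α}).toReal)
    (b : 𝕄 → 𝕎 → ℝ)
    (hb : ∀ (m : 𝕄) (w : 𝕎),
      b m w = ∫ ω, Y ω ∂(P[|{ω | A ω = a ∧ M ω = m ∧ W ω = w}]))
    (ξ : 𝕎 → ℝ)
    (hξ : ∀ w : 𝕎,
      ξ w = ∑ m : 𝕄, b m w * ((P[|{ω | A ω = a' ∧ W ω = w}]) {ω | M ω = m}).toReal)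
    (ψ : ℝ) (hψ : ψ = ∑ w : 𝕎, (P {ω | W ω = w}).toReal * ξ w)
    -- estimated nuisance functions
    (πhat₀ πhat₁ : 𝕎 → ℝ)
    (hπhat₀ : ∀ w : 𝕎, πhat₀ w ∈ Set.Ioo (0 : ℝ) 1)
    (hπhat₁ : ∀ w : 𝕎, πhat₁ w ∈ Set.Ioo (0 : ℝ) 1)
    (πMhat₀ πMhat₁ : 𝕄 → 𝕎 → ℝ)
    (hπMhat₀ : ∀ (m : 𝕄) (w : 𝕎), πMhat₀ m w ∈ Set.Ioo (0 : ℝ) 1)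
    (hπMhat₁ : ∀ (m : 𝕄) (w : 𝕎), πMhat₁ m w ∈ Set.Ioo (0 : ℝ) 1)
    (bhat : 𝕄 → 𝕎 → ℝ) (ξhat : 𝕎 → ℝ)
    (rhat : 𝕄 → 𝕎 → ℝ)
    (hrhat : ∀ (m : 𝕄) (w : 𝕎),
      rhat m w = (πMhat₁ m w * πhat₀ w) / (πMhat₀ m w * πhat₁ w))
    (Ψhat : ℝ)
    (hΨhat : Ψhat = ∫ ω,
        ((if A ω = a then (1 : ℝ) else 0) / πhat₀ (W ω)) * rhat (M ω) (W ω)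
            * (Y ω - bhat (M ω) (W ω))
          + ((if A ω = a' then (1 : ℝ) else 0) / πhat₁ (W ω))
            * (bhat (M ω) (W ω) - ξhat (W ω))
          + ξhat (W ω) ∂P)
    -- correctness of the propensity components
    (hcorrect₀ : ∀ w : 𝕎, πhat₀ w = πA a w)
    (hcorrect₁ : ∀ w : 𝕎, πhat₁ w = πA a' w)
    (hcorrectM₀ : ∀ (m : 𝕄) (w : 𝕎), πMhat₀ m w = πAM a m w)
    (hcorrectM₁ : ∀ (m : 𝕄) (w : 𝕎), πMhat₁ m w = πAM a' m w) :
    Ψhat = ψ := by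
    classical
  -- the joint random variable
  set T : Ω → Bool × 𝕄 × 𝕎 := fun ω => (A ω, M ω, W ω) with hTdef
  have hTmeas : Measurable T := hA.prodMk (hM.prodMk hW)
  have hEset : ∀ (α : Bool) (m : 𝕄) (w : 𝕎),
      {ω | A ω = α ∧ M ω = m ∧ W ω = w} = T ⁻¹' {(α, m, w)} := by
    intro α m w; ext ω; simp [hTdef, Prod.ext_iff]
  have hEm : ∀ p : Bool × 𝕄 × 𝕎, MeasurableSet (T ⁻¹' {p}) :=
    fun p => hTmeas (measurableSet_singleton p)
  -- elementary probabilities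
  set pr : Bool → 𝕄 → 𝕎 → ℝ := fun α m w => (P (T ⁻¹' {(α, m, w)})).toReal with hprdef
  have hPpos : ∀ (α : Bool) (m : 𝕄) (w : 𝕎), 0 < P (T ⁻¹' {(α, m, w)}) := by
    intro α m w; rw [← hEset]; exact positivity α m w
  have hprpos : ∀ (α : Bool) (m : 𝕄) (w : 𝕎), 0 < pr α m w := by
    intro α m w
    exact ENNReal.toReal_pos (hPpos α m w).ne' (measure_ne_top P _)
  set q : 𝕄 → 𝕎 → ℝ := fun m w => pr false m w + pr true m w with hqdef
  set sA : Bool → 𝕎 → ℝ := fun α w => ∑ m, pr α m w with hsAdef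
  set t : 𝕎 → ℝ := fun w => ∑ m, q m w with htdef
  have hqpos : ∀ m w, 0 < q m w := fun m w => add_pos (hprpos _ _ _) (hprpos _ _ _)
  have hsApos : ∀ α w, 0 < sA α w := fun α w =>
    Finset.sum_pos (fun m _ => hprpos α m w) Finset.univ_nonempty
  have htpos : ∀ w, 0 < t w := fun w =>
    Finset.sum_pos (fun m _ => hqpos m w) Finset.univ_nonempty
  -- measures of marginal events
  have hQmeas : ∀ (m : 𝕄) (w : 𝕎), (P {ω | M ω = m ∧ W ω = w}).toReal = q m w := by
    intro m w
    have hset : {ω | M ω = m ∧ W ω = w}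
        = T ⁻¹' {(false, m, w)} ∪ T ⁻¹' {(true, m, w)} := by
      ext ω
      simp only [Set.mem_setOf_eq, Set.mem_union, Set.mem_preimage,
        Set.mem_singleton_iff, hTdef, Prod.ext_iff]
      rcases Bool.dichotomy (A ω) with h | h <;> simp [h]
    have hdisj : Disjoint (T ⁻¹' {(false, m, w)}) (T ⁻¹' {(true, m, w)}) := by
      rw [Set.disjoint_left]
      rintro ω h1 h2
      simp only [Set.mem_preimage, Set.mem_singleton_iff] at h1 h2
      rw [h1] at h2; simp at h2
    rw [hset, measure_union hdisj (hEm _), ENNReal.toReal_add (measure_ne_top P _)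
      (measure_ne_top P _)]
  have hSmeas : ∀ (α : Bool) (w : 𝕎), (P {ω | A ω = α ∧ W ω = w}).toReal = sA α w := by
    intro α w
    have hset : {ω | A ω = α ∧ W ω = w} = ⋃ m ∈ (Finset.univ : Finset 𝕄),
        T ⁻¹' {(α, m, w)} := by
      ext ω
      simp only [Set.mem_setOf_eq, Set.mem_iUnion, Set.mem_preimage,
        Set.mem_singleton_iff, hTdef, Prod.ext_iff, Finset.mem_univ, exists_true_left, true_and]
      constructor
      · rintro ⟨h1, h2⟩; exact ⟨M ω, h1, rfl, h2⟩
      · rintro ⟨m, h1, h2, h3⟩; exact ⟨h1, h3⟩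
    have hdisj : ((Finset.univ : Finset 𝕄) : Set 𝕄).PairwiseDisjoint
        (fun m => T ⁻¹' {(α, m, w)}) := by
      intro m1 _ m2 _ hne
      rw [Function.onFun, Set.disjoint_left]
      rintro ω h1 h2
      simp only [Set.mem_preimage, Set.mem_singleton_iff] at h1 h2
      have h3 := h1.symm.trans h2
      simp only [Prod.mk.injEq, true_and, and_true] at h3
      exact hne h3
    rw [hset, measure_biUnion_finset hdisj (fun m _ => hEm _),
      ENNReal.toReal_sum (fun m _ => measure_ne_top P _)]
  have hTmeasW : ∀ w : 𝕎, (P {ω | W ω = w}).toReal = t w := by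
    intro w
    have hset : {ω | W ω = w} = ⋃ p ∈ (Finset.univ : Finset (Bool × 𝕄)),
        T ⁻¹' {(p.1, p.2, w)} := by
      ext ω
      simp only [Set.mem_setOf_eq, Set.mem_iUnion, Set.mem_preimage,
        Set.mem_singleton_iff, hTdef, Prod.ext_iff, Finset.mem_univ, exists_true_left, true_and]
      constructor
      · intro h; exact ⟨(A ω, M ω), rfl, rfl, h⟩
      · rintro ⟨p, h1, h2, h3⟩; exact h3
    have hdisj : ((Finset.univ : Finset (Bool × 𝕄)) : Set (Bool × 𝕄)).PairwiseDisjoint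
        (fun p : Bool × 𝕄 => T ⁻¹' {(p.1, p.2, w)}) := by
      intro p1 _ p2 _ hne
      rw [Function.onFun, Set.disjoint_left]
      rintro ω h1 h2
      simp only [Set.mem_preimage, Set.mem_singleton_iff] at h1 h2
      have h3 := h1.symm.trans h2
      simp only [Prod.mk.injEq, and_true] at h3
      exact hne (Prod.ext h3.1 h3.2)
    rw [hset, measure_biUnion_finset hdisj (fun p _ => hEm _),
      ENNReal.toReal_sum (fun p _ => measure_ne_top P _)]
    rw [htdef, Fintype.sum_prod_type, Finset.sum_comm]
    refine Finset.sum_congr rfl fun m _ => ?_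
    rw [Fintype.sum_bool]
    ring
  -- conditional probability identities
  have hmeasW : ∀ w : 𝕎, MeasurableSet {ω | W ω = w} := fun w =>
    hW (measurableSet_singleton w)
  have hmeasMW : ∀ (m : 𝕄) (w : 𝕎), MeasurableSet {ω | M ω = m ∧ W ω = w} := fun m w =>
    (hM (measurableSet_singleton m)).inter (hW (measurableSet_singleton w))
  have hmeasAW : ∀ (α : Bool) (w : 𝕎), MeasurableSet {ω | A ω = α ∧ W ω = w} := fun α w =>
    (hA (measurableSet_singleton α)).inter (hW (measurableSet_singleton w))
  have hπA' : ∀ (α : Bool) (w : 𝕎), πA α w = sA α w / t w := by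
    intro α w
    rw [hπA, cond_apply (hmeasW w)]
    have hset : {ω | W ω = w} ∩ {ω | A ω = α} = {ω | A ω = α ∧ W ω = w} := by
      ext ω; simp [Set.mem_inter_iff]; tauto
    rw [hset, ENNReal.toReal_mul, ENNReal.toReal_inv, hSmeas, hTmeasW,
      inv_mul_eq_div]
  have hπAM' : ∀ (α : Bool) (m : 𝕄) (w : 𝕎), πAM α m w = pr α m w / q m w := by
    intro α m w
    rw [hπAM, cond_apply (hmeasMW m w)]
    have hset : {ω | M ω = m ∧ W ω = w} ∩ {ω | A ω = α} = T ⁻¹' {(α, m, w)} := by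
      rw [← hEset]; ext ω; simp [Set.mem_inter_iff]; tauto
    rw [hset, ENNReal.toReal_mul, ENNReal.toReal_inv, hQmeas, inv_mul_eq_div]
  have hξ' : ∀ w : 𝕎, ξ w = ∑ m, b m w * (pr a' m w / sA a' w) := by
    intro w
    rw [hξ]
    congr 1; ext m
    rw [cond_apply (hmeasAW a' w)]
    have hset : {ω | A ω = a' ∧ W ω = w} ∩ {ω | M ω = m} = T ⁻¹' {(a', m, w)} := by
      rw [← hEset]; ext ω; simp [Set.mem_inter_iff]; tauto
    rw [hset, ENNReal.toReal_mul, ENNReal.toReal_inv, hSmeas, inv_mul_eq_div]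
  -- integral of Y on elementary events
  have hbint : ∀ (m : 𝕄) (w : 𝕎),
      ∫ ω in T ⁻¹' {(a, m, w)}, Y ω ∂P = pr a m w * b m w := by
    intro m w
    rw [hb, hEset]
    unfold ProbabilityTheory.cond
    rw [integral_smul_measure]
    rw [ENNReal.toReal_inv]
    rw [smul_eq_mul, ← mul_assoc]
    rw [mul_inv_cancel₀ (hprpos a m w).ne', one_mul]
  -- affine decomposition of the integrand
  set Cf : Bool × 𝕄 × 𝕎 → ℝ := fun p =>
    ((if p.1 = a then (1 : ℝ) else 0) / πhat₀ p.2.2) * rhat p.2.1 p.2.2 with hCfdef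
  set Df : Bool × 𝕄 × 𝕎 → ℝ := fun p =>
    -(Cf p * bhat p.2.1 p.2.2)
      + ((if p.1 = a' then (1 : ℝ) else 0) / πhat₁ p.2.2)
        * (bhat p.2.1 p.2.2 - ξhat p.2.2) + ξhat p.2.2 with hDfdef
  set f : Ω → ℝ := fun ω => Cf (T ω) * Y ω + Df (T ω) with hfdef
  have hΨf : Ψhat = ∫ ω, f ω ∂P := by
    rw [hΨhat]; congr 1; funext ω; simp only [hfdef, hCfdef, hDfdef, hTdef]; ring
  -- integrability
  obtain ⟨CY₀, hCY₀⟩ := hY_bdd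
  obtain ⟨B1, hB1⟩ := Finite.exists_le (fun p => |Cf p|)
  obtain ⟨B2, hB2⟩ := Finite.exists_le (fun p => |Df p|)
  set CY : ℝ := max CY₀ 0 with hCYdef
  have hCY : ∀ ω, |Y ω| ≤ CY := fun ω => le_trans (hCY₀ ω) (le_max_left _ _)
  have hCYnn : 0 ≤ CY := le_max_right _ _
  have hB1nn : 0 ≤ B1 := le_trans (abs_nonneg _) (hB1 (Classical.arbitrary _))
  have hYint : Integrable Y P := by
    refine (integrable_const CY).mono' hY_meas.aestronglyMeasurable (ae_of_all _ ?_)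
    intro ω; rw [Real.norm_eq_abs]; exact hCY ω
  have hfmeas : Measurable f := by
    exact (((measurable_of_countable Cf).comp hTmeas).mul hY_meas).add
      ((measurable_of_countable Df).comp hTmeas)
  have hfint : Integrable f P := by
    refine (integrable_const (B1 * CY + B2)).mono' hfmeas.aestronglyMeasurable
      (ae_of_all _ ?_)
    intro ω
    rw [Real.norm_eq_abs, hfdef]
    calc |Cf (T ω) * Y ω + Df (T ω)| ≤ |Cf (T ω) * Y ω| + |Df (T ω)| := abs_add_le _ _
      _ ≤ B1 * CY + B2 := by
          have := mul_le_mul (hB1 (T ω)) (hCY ω) (abs_nonneg _) hB1nn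
          rw [abs_mul]
          exact add_le_add this (hB2 (T ω))
  -- decompose the integral over the elementary events
  have hcover : ⋃ p : Bool × 𝕄 × 𝕎, T ⁻¹' {p} = Set.univ := by
    ext ω; simp
  have hdisjT : Pairwise (Function.onFun Disjoint fun p : Bool × 𝕄 × 𝕎 => T ⁻¹' {p}) := by
    intro p1 p2 hne
    rw [Function.onFun, Set.disjoint_left]
    rintro ω h1 h2
    simp only [Set.mem_preimage, Set.mem_singleton_iff] at h1 h2
    exact hne (h1.symm.trans h2)
  have hsum : Ψhat = ∑ p : Bool × 𝕄 × 𝕎, ∫ ω in T ⁻¹' {p}, f ω ∂P := by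
    rw [hΨf, ← setIntegral_univ, ← hcover,
      integral_iUnion_fintype hEm hdisjT (fun p => hfint.integrableOn)]
  -- compute each piece
  have hpiece : ∀ p : Bool × 𝕄 × 𝕎, ∫ ω in T ⁻¹' {p}, f ω ∂P
      = Cf p * (∫ ω in T ⁻¹' {p}, Y ω ∂P) + Df p * (P (T ⁻¹' {p})).toReal := by
    intro p
    have h1 : Set.EqOn f (fun ω => Cf p * Y ω + Df p) (T ⁻¹' {p}) := by
      intro ω hω
      simp only [Set.mem_preimage, Set.mem_singleton_iff] at hω
      simp [hfdef, hω]
    rw [setIntegral_congr_fun (hEm p) h1,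
      integral_add (hYint.integrableOn.const_mul _)
        (integrable_const _).integrableOn,
      integral_const_mul, setIntegral_const, smul_eq_mul, measureReal_def]
    ring
  have hterm : ∀ (α : Bool) (m : 𝕄) (w : 𝕎), ∫ ω in T ⁻¹' {(α, m, w)}, f ω ∂P
      = Cf (α, m, w) * (pr α m w * b m w) + Df (α, m, w) * pr α m w := by
    intro α m w
    rw [hpiece]
    by_cases hα : α = a
    · subst hα; rw [hbint]
    · have hC0 : Cf (α, m, w) = 0 := by simp [hCfdef, hα]
      rw [hC0, zero_mul, zero_mul]
  -- the grand sum
  have hswap : ∀ X : Bool → 𝕄 → 𝕎 → ℝ,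
      (∑ p : Bool × 𝕄 × 𝕎, X p.1 p.2.1 p.2.2) = ∑ w : 𝕎, ∑ m : 𝕄, ∑ α : Bool, X α m w := by
    intro X
    rw [Fintype.sum_prod_type]
    simp_rw [Fintype.sum_prod_type]
    calc (∑ α : Bool, ∑ m : 𝕄, ∑ w : 𝕎, X α m w)
        = ∑ m : 𝕄, ∑ α : Bool, ∑ w : 𝕎, X α m w := Finset.sum_comm
      _ = ∑ m : 𝕄, ∑ w : 𝕎, ∑ α : Bool, X α m w :=
          Finset.sum_congr rfl fun m _ => Finset.sum_comm
      _ = ∑ w : 𝕎, ∑ m : 𝕄, ∑ α : Bool, X α m w := Finset.sum_comm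
  have hΨsum : Ψhat = ∑ w : 𝕎, ∑ m : 𝕄, ∑ α : Bool,
      (Cf (α, m, w) * (pr α m w * b m w) + Df (α, m, w) * pr α m w) := by
    rw [hsum]
    rw [← hswap (fun α m w => Cf (α, m, w) * (pr α m w * b m w) + Df (α, m, w) * pr α m w)]
    exact Finset.sum_congr rfl fun p _ => hterm p.1 p.2.1 p.2.2
  -- collapse the Bool sum
  have hbool : ∀ (m : 𝕄) (w : 𝕎),
      (∑ α : Bool, (Cf (α, m, w) * (pr α m w * b m w) + Df (α, m, w) * pr α m w))
        = rhat m w / πhat₀ w * (pr a m w * (b m w - bhat m w))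
          + (bhat m w - ξhat w) / πhat₁ w * pr a' m w
          + ξhat w * q m w := by
    intro m w
    rcases a with _ | _ <;> rcases a' with _ | _ <;>
      simp [hCfdef, hDfdef, Fintype.sum_bool, hqdef] <;> ring
  -- per-cell algebraic identity with the true propensities plugged in
  have key2 : ∀ (m : 𝕄) (w : 𝕎),
      rhat m w / πhat₀ w * (pr a m w * (b m w - bhat m w))
        + (bhat m w - ξhat w) / πhat₁ w * pr a' m w + ξhat w * q m w
      = t w * (b m w * (pr a' m w / sA a' w))
        + ξhat w * (q m w - t w * (pr a' m w / sA a' w)) := by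
    intro m w
    rw [hrhat, hcorrect₀, hcorrect₁, hcorrectM₀, hcorrectM₁, hπA', hπA',
      hπAM', hπAM']
    have h1 : pr a m w ≠ 0 := (hprpos a m w).ne'
    have h2 : pr a' m w ≠ 0 := (hprpos a' m w).ne'
    have h3 : q m w ≠ 0 := (hqpos m w).ne'
    have h4 : sA a w ≠ 0 := (hsApos a w).ne'
    have h5 : sA a' w ≠ 0 := (hsApos a' w).ne'
    have h6 : t w ≠ 0 := (htpos w).ne'
    field_simp
    ring
  -- put everything together
  rw [hΨsum, hψ]
  refine Finset.sum_congr rfl fun w _ => ?_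
  rw [hTmeasW]
  calc (∑ m : 𝕄, ∑ α : Bool,
        (Cf (α, m, w) * (pr α m w * b m w) + Df (α, m, w) * pr α m w))
      = ∑ m : 𝕄, (t w * (b m w * (pr a' m w / sA a' w))
          + ξhat w * (q m w - t w * (pr a' m w / sA a' w))) :=
        Finset.sum_congr rfl fun m _ => by rw [hbool, key2]
    _ = t w * ξ w := by
        rw [Finset.sum_add_distrib, ← Finset.mul_sum, ← hξ' w, ← Finset.mul_sum]
        have e2 : ∑ m : 𝕄, (q m w - t w * (pr a' m w / sA a' w)) = 0 := by
          rw [Finset.sum_sub_distrib]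
          have e3 : ∑ m : 𝕄, t w * (pr a' m w / sA a' w) = t w := by
            rw [← Finset.mul_sum, ← Finset.sum_div,
              show (∑ m : 𝕄, pr a' m w) = sA a' w from rfl,
              div_self (hsApos a' w).ne', mul_one]
          rw [show (∑ m : 𝕄, q m w) = t w from rfl, e3, sub_self]
        rw [e2, mul_zero, add_zero]
end

section
/- Robustness to a misspecified mediator-conditional propensity and sequential regression: if the outcome regression and the marginal propensities are correct, i.e. b̂(m, w) = b(m, w) for all m ∈ 𝕄, w ∈ 𝕎 and π̂₀(w) = π_A(a | w), π̂₁(w) = π_A(a' | w) for all w ∈ 𝕎, then for arbitrary π̂ᴹ₀, π̂ᴹ₁ : 𝕄 × 𝕎 → (0, 1) and arbitrary ξ̂ : 𝕎 → ℝ the AIPW functional is exactly unbiased: Ψ(π̂, b̂, ξ̂) = ψ. (Population version of Corollary 1, case (ii).) -/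
open MeasureTheory ProbabilityTheory
open scoped ENNReal BigOperators

lemma aipw_meas_union_sum {Ω : Type*} [MeasurableSpace Ω] (P : Measure Ω) [IsFiniteMeasure P]
    {ι : Type*} [Fintype ι] (T : ι → Set Ω) (hm : ∀ i, MeasurableSet (T i))
    (hd : Pairwise (Function.onFun Disjoint T)) :
    (P (⋃ i, T i)).toReal = ∑ i, (P (T i)).toReal := by
  rw [measure_iUnion hd hm, tsum_fintype, ENNReal.toReal_sum (fun i _ => measure_ne_top P _)]

lemma aipw_integral_split {Ω : Type*} [MeasurableSpace Ω] (P : Measure Ω) [IsProbabilityMeasure P]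
    {ι : Type*} [Fintype ι] [MeasurableSpace ι] [MeasurableSingletonClass ι]
    (Z : Ω → ι) (hZ : Measurable Z) (Y : Ω → ℝ) (hY : Integrable Y P) (F G : ι → ℝ) :
    ∫ ω, (F (Z ω) * Y ω + G (Z ω)) ∂P
      = ∑ i, (F i * ∫ ω in Z ⁻¹' {i}, Y ω ∂P + G i * (P (Z ⁻¹' {i})).toReal) := by
  have hmeas : ∀ i, MeasurableSet (Z ⁻¹' {i}) := fun i => hZ (measurableSet_singleton i)
  have key : ∀ ω, F (Z ω) * Y ω + G (Z ω)
      = ∑ i, Set.indicator (Z ⁻¹' {i}) (fun ω => F i * Y ω + G i) ω := by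
    intro ω
    rw [Finset.sum_eq_single (Z ω)]
    · rw [Set.indicator_of_mem (by simp)]
    · intro i _ hi
      exact Set.indicator_of_notMem (by simpa using (Ne.symm hi)) _
    · simp
  have hint : ∀ i : ι, Integrable
      (Set.indicator (Z ⁻¹' {i}) (fun ω => F i * Y ω + G i)) P := by
    intro i
    exact ((hY.const_mul (F i)).add (integrable_const (G i))).indicator (hmeas i)
  calc ∫ ω, (F (Z ω) * Y ω + G (Z ω)) ∂P
      = ∫ ω, ∑ i, Set.indicator (Z ⁻¹' {i}) (fun ω => F i * Y ω + G i) ω ∂P :=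
        integral_congr_ae (Filter.Eventually.of_forall key)
    _ = ∑ i, ∫ ω, Set.indicator (Z ⁻¹' {i}) (fun ω => F i * Y ω + G i) ω ∂P :=
        integral_finset_sum _ (fun i _ => hint i)
    _ = ∑ i, (F i * ∫ ω in Z ⁻¹' {i}, Y ω ∂P + G i * (P (Z ⁻¹' {i})).toReal) := by
        refine Finset.sum_congr rfl (fun i _ => ?_)
        rw [integral_indicator (hmeas i),
          integral_add ((hY.const_mul (F i)).integrableOn) (integrable_const (G i)),
          MeasureTheory.integral_const_mul, setIntegral_const]
        simp [mul_comm, Measure.real]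

lemma aipw_algebra {𝕄 𝕎 : Type*} [Fintype 𝕄] [Nonempty 𝕄] [Fintype 𝕎]
    (a a' : Bool) (p I : Bool → 𝕄 → 𝕎 → ℝ) (b : 𝕄 → 𝕎 → ℝ) (ξ ξhat πhat₀ : 𝕎 → ℝ)
    (rhat : 𝕄 → 𝕎 → ℝ) (πA' : 𝕎 → ℝ)
    (hppos : ∀ α m w, 0 < p α m w)
    (hI : ∀ m w, I a m w = b m w * p a m w)
    (hπ : ∀ w, πA' w = (∑ m, p a' m w) / (∑ α : Bool, ∑ m, p α m w))
    (hξ : ∀ w, ξ w = ∑ m, b m w * (p a' m w / ∑ m', p a' m' w)) :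
    ∑ α : Bool, ∑ m : 𝕄, ∑ w : 𝕎,
      ((if α = a then (1:ℝ) else 0) / πhat₀ w * rhat m w * I α m w
        + (-((if α = a then (1:ℝ) else 0) / πhat₀ w * rhat m w * b m w)
            + (if α = a' then (1:ℝ) else 0) / πA' w * (b m w - ξhat w) + ξhat w) * p α m w)
      = ∑ w : 𝕎, (∑ α : Bool, ∑ m : 𝕄, p α m w) * ξ w := by
  have hQpos : ∀ w, 0 < ∑ m, p a' m w :=
    fun w => Finset.sum_pos (fun m _ => hppos _ _ _) Finset.univ_nonempty
  have hRpos : ∀ w, 0 < ∑ α : Bool, ∑ m, p α m w :=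
    fun w => Finset.sum_pos (fun α _ => Finset.sum_pos (fun m _ => hppos _ _ _)
      Finset.univ_nonempty) Finset.univ_nonempty
  have hterm : ∀ (α : Bool) (m : 𝕄) (w : 𝕎),
      ((if α = a then (1:ℝ) else 0) / πhat₀ w * rhat m w * I α m w
        + (-((if α = a then (1:ℝ) else 0) / πhat₀ w * rhat m w * b m w)
            + (if α = a' then (1:ℝ) else 0) / πA' w * (b m w - ξhat w) + ξhat w) * p α m w)
      = (if α = a' then (b m w - ξhat w) / πA' w * p a' m w else 0) + ξhat w * p α m w := by
    intro α m w
    by_cases hα : α = a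
    · subst hα
      by_cases ha' : α = a'
      · subst ha'; simp only [if_pos rfl, hI, if_true, eq_self_iff_true]; ring
      · simp only [if_pos rfl, if_neg ha', hI, if_true, eq_self_iff_true]; ring
    · by_cases hα' : α = a'
      · subst hα'; simp only [if_neg hα, if_pos rfl, if_true, eq_self_iff_true]; ring
      · simp only [if_neg hα, if_neg hα']; ring
  calc ∑ α : Bool, ∑ m : 𝕄, ∑ w : 𝕎,
      ((if α = a then (1:ℝ) else 0) / πhat₀ w * rhat m w * I α m w
        + (-((if α = a then (1:ℝ) else 0) / πhat₀ w * rhat m w * b m w)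
            + (if α = a' then (1:ℝ) else 0) / πA' w * (b m w - ξhat w) + ξhat w) * p α m w)
      = ∑ α : Bool, ∑ m : 𝕄, ∑ w : 𝕎,
          ((if α = a' then (b m w - ξhat w) / πA' w * p a' m w else 0) + ξhat w * p α m w) :=
        Finset.sum_congr rfl fun α _ => Finset.sum_congr rfl fun m _ =>
          Finset.sum_congr rfl fun w _ => hterm α m w
    _ = (∑ α : Bool, ∑ m : 𝕄, ∑ w : 𝕎,
          (if α = a' then (b m w - ξhat w) / πA' w * p a' m w else 0))
        + ∑ α : Bool, ∑ m : 𝕄, ∑ w : 𝕎, ξhat w * p α m w := by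
        simp only [Finset.sum_add_distrib]
    _ = (∑ m : 𝕄, ∑ w : 𝕎, (b m w - ξhat w) / πA' w * p a' m w)
        + ∑ w : 𝕎, ξhat w * ∑ α : Bool, ∑ m : 𝕄, p α m w := by
        congr 1
        · rw [Finset.sum_eq_single a' (fun β _ hβ => by simp [hβ]) (by simp)]; simp
        · calc ∑ α : Bool, ∑ m : 𝕄, ∑ w : 𝕎, ξhat w * p α m w
              = ∑ α : Bool, ∑ w : 𝕎, ∑ m : 𝕄, ξhat w * p α m w :=
                Finset.sum_congr rfl fun α _ => Finset.sum_comm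
            _ = ∑ w : 𝕎, ∑ α : Bool, ∑ m : 𝕄, ξhat w * p α m w := Finset.sum_comm
            _ = ∑ w : 𝕎, ξhat w * ∑ α : Bool, ∑ m : 𝕄, p α m w := by
                simp only [← Finset.mul_sum]
    _ = (∑ w : 𝕎, ∑ m : 𝕄, (b m w - ξhat w) / πA' w * p a' m w)
        + ∑ w : 𝕎, ξhat w * ∑ α : Bool, ∑ m : 𝕄, p α m w := by rw [Finset.sum_comm]
    _ = ∑ w : 𝕎, ((∑ m : 𝕄, (b m w - ξhat w) / πA' w * p a' m w)
        + ξhat w * ∑ α : Bool, ∑ m : 𝕄, p α m w) := by rw [Finset.sum_add_distrib]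
    _ = ∑ w : 𝕎, (∑ α : Bool, ∑ m : 𝕄, p α m w) * ξ w := by
        refine Finset.sum_congr rfl fun w _ => ?_
        have hQ0 : (∑ m, p a' m w) ≠ 0 := (hQpos w).ne'
        have hR0 : (∑ α : Bool, ∑ m, p α m w) ≠ 0 := (hRpos w).ne'
        rw [hξ w, hπ w]
        have hsummand : ∀ m : 𝕄,
            (b m w - ξhat w) / ((∑ m, p a' m w) / (∑ α : Bool, ∑ m, p α m w)) * p a' m w
            = (∑ α : Bool, ∑ m, p α m w) * (b m w * (p a' m w / ∑ m', p a' m' w))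
              - ξhat w * ((∑ α : Bool, ∑ m, p α m w) / (∑ m, p a' m w)) * p a' m w := by
          intro m; field_simp
        rw [Finset.sum_congr rfl (fun m _ => hsummand m), Finset.sum_sub_distrib,
          ← Finset.mul_sum, ← Finset.mul_sum]
        have hcancel : ξhat w * ((∑ α : Bool, ∑ m, p α m w) / (∑ m, p a' m w))
            * (∑ m, p a' m w) = ξhat w * (∑ α : Bool, ∑ m, p α m w) := by
          field_simp
        rw [hcancel]; ring

/-- Population version of Corollary 1, case (ii): if the outcome regression and
the marginal propensities are correct, the AIPW functional is exactly unbiased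
for arbitrary mediator-conditional propensities and arbitrary `ξ̂`. -/
theorem aipw_robust_to_mediator_propensity_and_seqreg
    {Ω : Type*} [MeasurableSpace Ω] (P : Measure Ω) [IsProbabilityMeasure P]
    {𝕄 𝕎 : Type*} [Fintype 𝕄] [Nonempty 𝕄] [MeasurableSpace 𝕄] [MeasurableSingletonClass 𝕄]
    [Fintype 𝕎] [Nonempty 𝕎] [MeasurableSpace 𝕎] [MeasurableSingletonClass 𝕎]
    (A : Ω → Bool) (M : Ω → 𝕄) (W : Ω → 𝕎)
    (hA : Measurable A) (hM : Measurable M) (hW : Measurable W)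
    (positivity : ∀ (α : Bool) (m : 𝕄) (w : 𝕎),
      0 < P {ω | A ω = α ∧ M ω = m ∧ W ω = w})
    (a a' : Bool)
    (Y : Ω → ℝ) (hY_meas : Measurable Y) (hY_bdd : ∃ C : ℝ, ∀ ω, |Y ω| ≤ C)
    (πA : Bool → 𝕎 → ℝ)
    (hπA : ∀ (α : Bool) (w : 𝕎), πA α w = ((P[|{ω | W ω = w}]) {ω | A ω = α}).toReal)
    (b : 𝕄 → 𝕎 → ℝ)
    (hb : ∀ (m : 𝕄) (w : 𝕎),
      b m w = ∫ ω, Y ω ∂(P[|{ω | A ω = a ∧ M ω = m ∧ W ω = w}]))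
    (ξ : 𝕎 → ℝ)
    (hξ : ∀ w : 𝕎,
      ξ w = ∑ m : 𝕄, b m w * ((P[|{ω | A ω = a' ∧ W ω = w}]) {ω | M ω = m}).toReal)
    (ψ : ℝ) (hψ : ψ = ∑ w : 𝕎, (P {ω | W ω = w}).toReal * ξ w)
    -- estimated nuisance functions
    (πhat₀ πhat₁ : 𝕎 → ℝ)
    (hπhat₀ : ∀ w : 𝕎, πhat₀ w ∈ Set.Ioo (0 : ℝ) 1)
    (hπhat₁ : ∀ w : 𝕎, πhat₁ w ∈ Set.Ioo (0 : ℝ) 1)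
    (πMhat₀ πMhat₁ : 𝕄 → 𝕎 → ℝ)
    (hπMhat₀ : ∀ (m : 𝕄) (w : 𝕎), πMhat₀ m w ∈ Set.Ioo (0 : ℝ) 1)
    (hπMhat₁ : ∀ (m : 𝕄) (w : 𝕎), πMhat₁ m w ∈ Set.Ioo (0 : ℝ) 1)
    (bhat : 𝕄 → 𝕎 → ℝ) (ξhat : 𝕎 → ℝ)
    (rhat : 𝕄 → 𝕎 → ℝ)
    (hrhat : ∀ (m : 𝕄) (w : 𝕎),
      rhat m w = (πMhat₁ m w * πhat₀ w) / (πMhat₀ m w * πhat₁ w))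
    (Ψhat : ℝ)
    (hΨhat : Ψhat = ∫ ω,
        ((if A ω = a then (1 : ℝ) else 0) / πhat₀ (W ω)) * rhat (M ω) (W ω)
            * (Y ω - bhat (M ω) (W ω))
          + ((if A ω = a' then (1 : ℝ) else 0) / πhat₁ (W ω))
            * (bhat (M ω) (W ω) - ξhat (W ω))
          + ξhat (W ω) ∂P)
    -- correctness of the outcome regression and marginal propensities
    (hcorrect_b : ∀ (m : 𝕄) (w : 𝕎), bhat m w = b m w)
    (hcorrect₀ : ∀ w : 𝕎, πhat₀ w = πA a w)
    (hcorrect₁ : ∀ w : 𝕎, πhat₁ w = πA a' w) :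
    Ψhat = ψ := by
  classical
  obtain ⟨C, hC⟩ := hY_bdd
  have hYint : Integrable Y P :=
    (integrable_const C).mono' hY_meas.aestronglyMeasurable
      (Filter.Eventually.of_forall fun ω => by simpa [Real.norm_eq_abs] using hC ω)
  set Z : Ω → Bool × 𝕄 × 𝕎 := fun ω => (A ω, M ω, W ω) with hZdef
  have hZ : Measurable Z := hA.prodMk (hM.prodMk hW)
  -- basic sets
  have hSet : ∀ (α : Bool) (m : 𝕄) (w : 𝕎),
      {ω | A ω = α ∧ M ω = m ∧ W ω = w} = Z ⁻¹' {(α, m, w)} := by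
    intro α m w; ext ω; simp [hZdef, Prod.ext_iff]
  have hppos : ∀ (α : Bool) (m : 𝕄) (w : 𝕎), 0 < (P (Z ⁻¹' {(α, m, w)})).toReal := by
    intro α m w
    exact ENNReal.toReal_pos (by rw [← hSet]; exact (positivity α m w).ne') (measure_ne_top _ _)
  -- decompositions of measures into sums
  have hWdecomp : ∀ w : 𝕎, (P {ω | W ω = w}).toReal
      = ∑ α : Bool, ∑ m : 𝕄, (P (Z ⁻¹' {(α, m, w)})).toReal := by
    intro w
    have hU : {ω | W ω = w} = ⋃ i : Bool × 𝕄, Z ⁻¹' {(i.1, i.2, w)} := by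
      ext ω
      simp only [Set.mem_setOf_eq, Set.mem_iUnion, Set.mem_preimage, Set.mem_singleton_iff,
        hZdef, Prod.mk.injEq]
      constructor
      · intro h; exact ⟨(A ω, M ω), rfl, rfl, h⟩
      · rintro ⟨i, -, -, h⟩; exact h
    rw [hU, aipw_meas_union_sum P _ (fun i => hZ (measurableSet_singleton _)) ?_,
      Fintype.sum_prod_type]
    intro i j hij
    refine Set.disjoint_left.2 fun ω hi hj => hij ?_
    simp only [Set.mem_preimage, Set.mem_singleton_iff] at hi hj
    simpa [Prod.ext_iff] using hi.symm.trans hj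
  have hAWdecomp : ∀ w : 𝕎, (P {ω | A ω = a' ∧ W ω = w}).toReal
      = ∑ m : 𝕄, (P (Z ⁻¹' {(a', m, w)})).toReal := by
    intro w
    have hU : {ω | A ω = a' ∧ W ω = w} = ⋃ m : 𝕄, Z ⁻¹' {(a', m, w)} := by
      ext ω
      simp only [Set.mem_setOf_eq, Set.mem_iUnion, Set.mem_preimage, Set.mem_singleton_iff,
        hZdef, Prod.mk.injEq]
      constructor
      · rintro ⟨h1, h2⟩; exact ⟨M ω, h1, rfl, h2⟩
      · rintro ⟨m, h1, -, h2⟩; exact ⟨h1, h2⟩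
    rw [hU, aipw_meas_union_sum P _ (fun m => hZ (measurableSet_singleton _)) ?_]
    intro i j hij
    refine Set.disjoint_left.2 fun ω hi hj => hij ?_
    simp only [Set.mem_preimage, Set.mem_singleton_iff] at hi hj
    simpa [Prod.ext_iff] using hi.symm.trans hj
  have hWAdecomp : ∀ (α : Bool) (w : 𝕎), (P ({ω | W ω = w} ∩ {ω | A ω = α})).toReal
      = ∑ m : 𝕄, (P (Z ⁻¹' {(α, m, w)})).toReal := by
    intro α w
    have hU : {ω | W ω = w} ∩ {ω | A ω = α} = ⋃ m : 𝕄, Z ⁻¹' {(α, m, w)} := by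
      ext ω
      simp only [Set.mem_inter_iff, Set.mem_setOf_eq, Set.mem_iUnion, Set.mem_preimage,
        Set.mem_singleton_iff, hZdef, Prod.mk.injEq]
      constructor
      · rintro ⟨h1, h2⟩; exact ⟨M ω, h2, rfl, h1⟩
      · rintro ⟨m, h1, -, h2⟩; exact ⟨h2, h1⟩
    rw [hU, aipw_meas_union_sum P _ (fun m => hZ (measurableSet_singleton _)) ?_]
    intro i j hij
    refine Set.disjoint_left.2 fun ω hi hj => hij ?_
    simp only [Set.mem_preimage, Set.mem_singleton_iff] at hi hj
    simpa [Prod.ext_iff] using hi.symm.trans hj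
  -- the integral of Y over the cells, in terms of b
  have hcondint : ∀ s : Set Ω, ∫ ω, Y ω ∂(P[|s])
      = ((P s)⁻¹).toReal * ∫ ω in s, Y ω ∂P := by
    intro s
    rw [ProbabilityTheory.cond, integral_smul_measure, smul_eq_mul]
  have hI : ∀ (m : 𝕄) (w : 𝕎), (∫ ω in Z ⁻¹' {(a, m, w)}, Y ω ∂P)
      = b m w * (P (Z ⁻¹' {(a, m, w)})).toReal := by
    intro m w
    have h := hb m w
    rw [hSet a m w, hcondint, ENNReal.toReal_inv] at h
    have hp0 : (P (Z ⁻¹' {(a, m, w)})).toReal ≠ 0 := (hppos a m w).ne'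
    rw [h]; field_simp
  -- the marginal propensity at a'
  have hπ : ∀ w : 𝕎, πA a' w = (∑ m : 𝕄, (P (Z ⁻¹' {(a', m, w)})).toReal)
      / (∑ α : Bool, ∑ m : 𝕄, (P (Z ⁻¹' {(α, m, w)})).toReal) := by
    intro w
    have hmW : MeasurableSet {ω | W ω = w} := hW (measurableSet_singleton w)
    rw [hπA a' w, cond_apply hmW P,
      ENNReal.toReal_mul, ENNReal.toReal_inv, hWAdecomp a' w, hWdecomp w, inv_mul_eq_div]
  -- ξ rewritten
  have hξ' : ∀ w : 𝕎, ξ w = ∑ m : 𝕄, b m w * ((P (Z ⁻¹' {(a', m, w)})).toReal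
      / ∑ m' : 𝕄, (P (Z ⁻¹' {(a', m', w)})).toReal) := by
    intro w
    rw [hξ w]
    refine Finset.sum_congr rfl fun m _ => ?_
    congr 1
    have hmAW : MeasurableSet {ω | A ω = a' ∧ W ω = w} :=
      (hA (measurableSet_singleton a')).inter (hW (measurableSet_singleton w))
    rw [cond_apply hmAW P, ENNReal.toReal_mul, ENNReal.toReal_inv, hAWdecomp w,
      show {ω | A ω = a' ∧ W ω = w} ∩ {ω | M ω = m} = Z ⁻¹' {(a', m, w)} by
        ext ω; simp only [Set.mem_inter_iff, Set.mem_setOf_eq, Set.mem_preimage,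
          Set.mem_singleton_iff, hZdef, Prod.mk.injEq]; tauto,
      inv_mul_eq_div]
  -- split integral
  calc Ψhat = ∫ ω, ((fun i : Bool × 𝕄 × 𝕎 =>
          (if i.1 = a then (1:ℝ) else 0) / πhat₀ i.2.2 * rhat i.2.1 i.2.2) (Z ω) * Y ω
        + (fun i : Bool × 𝕄 × 𝕎 =>
          -((if i.1 = a then (1:ℝ) else 0) / πhat₀ i.2.2 * rhat i.2.1 i.2.2 * b i.2.1 i.2.2)
            + (if i.1 = a' then (1:ℝ) else 0) / πA a' i.2.2 * (b i.2.1 i.2.2 - ξhat i.2.2)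
            + ξhat i.2.2) (Z ω)) ∂P := by
        rw [hΨhat]
        refine integral_congr_ae (Filter.Eventually.of_forall fun ω => ?_)
        simp only [hZdef]
        rw [hcorrect_b, hcorrect₁]
        ring
    _ = ∑ i : Bool × 𝕄 × 𝕎,
        ((fun i : Bool × 𝕄 × 𝕎 =>
          (if i.1 = a then (1:ℝ) else 0) / πhat₀ i.2.2 * rhat i.2.1 i.2.2) i
            * ∫ ω in Z ⁻¹' {i}, Y ω ∂P
          + (fun i : Bool × 𝕄 × 𝕎 =>
          -((if i.1 = a then (1:ℝ) else 0) / πhat₀ i.2.2 * rhat i.2.1 i.2.2 * b i.2.1 i.2.2)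
            + (if i.1 = a' then (1:ℝ) else 0) / πA a' i.2.2 * (b i.2.1 i.2.2 - ξhat i.2.2)
            + ξhat i.2.2) i * (P (Z ⁻¹' {i})).toReal) :=
      aipw_integral_split P Z hZ Y hYint
        (fun i : Bool × 𝕄 × 𝕎 =>
          (if i.1 = a then (1:ℝ) else 0) / πhat₀ i.2.2 * rhat i.2.1 i.2.2)
        (fun i : Bool × 𝕄 × 𝕎 =>
          -((if i.1 = a then (1:ℝ) else 0) / πhat₀ i.2.2 * rhat i.2.1 i.2.2 * b i.2.1 i.2.2)
            + (if i.1 = a' then (1:ℝ) else 0) / πA a' i.2.2 * (b i.2.1 i.2.2 - ξhat i.2.2)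
            + ξhat i.2.2)
    _ = ∑ α : Bool, ∑ m : 𝕄, ∑ w : 𝕎,
        ((if α = a then (1:ℝ) else 0) / πhat₀ w * rhat m w
            * (∫ ω in Z ⁻¹' {(α, m, w)}, Y ω ∂P)
          + (-((if α = a then (1:ℝ) else 0) / πhat₀ w * rhat m w * b m w)
            + (if α = a' then (1:ℝ) else 0) / πA a' w * (b m w - ξhat w) + ξhat w)
            * (P (Z ⁻¹' {(α, m, w)})).toReal) := by
      simp only [Fintype.sum_prod_type]
    _ = ∑ w : 𝕎, (∑ α : Bool, ∑ m : 𝕄, (P (Z ⁻¹' {(α, m, w)})).toReal) * ξ w :=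
      aipw_algebra a a' (fun α m w => (P (Z ⁻¹' {(α, m, w)})).toReal)
        (fun α m w => ∫ ω in Z ⁻¹' {(α, m, w)}, Y ω ∂P) b ξ ξhat πhat₀ rhat (πA a')
        hppos hI hπ hξ'
    _ = ψ := by
      rw [hψ]
      exact Finset.sum_congr rfl fun w _ => by rw [hWdecomp w]
end

section
/- Robustness to misspecified propensities: if the outcome regression and the sequential regression are correct, i.e. b̂(m, w) = b(m, w) for all m ∈ 𝕄, w ∈ 𝕎 and ξ̂(w) = ξ(w) for all w ∈ 𝕎, then for arbitrary π̂₀, π̂₁ : 𝕎 → (0, 1) and π̂ᴹ₀, π̂ᴹ₁ : 𝕄 × 𝕎 → (0, 1) the AIPW functional is exactly unbiased: Ψ(π̂, b̂, ξ̂) = ψ. (Population version of Corollary 1, case (iii).) -/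
open MeasureTheory ProbabilityTheory
open scoped ENNReal BigOperators

/-- Population version of Corollary 1, case (iii): if the outcome regression and
the sequential regression are correct, the AIPW functional is exactly unbiased
for arbitrary propensity models. -/
theorem aipw_robust_to_propensities
    {Ω : Type*} [MeasurableSpace Ω] (P : Measure Ω) [IsProbabilityMeasure P]
    {𝕄 𝕎 : Type*} [Fintype 𝕄] [Nonempty 𝕄] [MeasurableSpace 𝕄] [MeasurableSingletonClass 𝕄]
    [Fintype 𝕎] [Nonempty 𝕎] [MeasurableSpace 𝕎] [MeasurableSingletonClass 𝕎]
    (A : Ω → Bool) (M : Ω → 𝕄) (W : Ω → 𝕎)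
    (hA : Measurable A) (hM : Measurable M) (hW : Measurable W)
    (positivity : ∀ (α : Bool) (m : 𝕄) (w : 𝕎),
      0 < P {ω | A ω = α ∧ M ω = m ∧ W ω = w})
    (a a' : Bool)
    (Y : Ω → ℝ) (hY_meas : Measurable Y) (hY_bdd : ∃ C : ℝ, ∀ ω, |Y ω| ≤ C)
    (b : 𝕄 → 𝕎 → ℝ)
    (hb : ∀ (m : 𝕄) (w : 𝕎),
      b m w = ∫ ω, Y ω ∂(P[|{ω | A ω = a ∧ M ω = m ∧ W ω = w}]))
    (ξ : 𝕎 → ℝ)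
    (hξ : ∀ w : 𝕎,
      ξ w = ∑ m : 𝕄, b m w * ((P[|{ω | A ω = a' ∧ W ω = w}]) {ω | M ω = m}).toReal)
    (ψ : ℝ) (hψ : ψ = ∑ w : 𝕎, (P {ω | W ω = w}).toReal * ξ w)
    -- estimated nuisance functions, arbitrary propensities with values in (0, 1)
    (πhat₀ πhat₁ : 𝕎 → ℝ)
    (hπhat₀ : ∀ w : 𝕎, πhat₀ w ∈ Set.Ioo (0 : ℝ) 1)
    (hπhat₁ : ∀ w : 𝕎, πhat₁ w ∈ Set.Ioo (0 : ℝ) 1)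
    (πMhat₀ πMhat₁ : 𝕄 → 𝕎 → ℝ)
    (hπMhat₀ : ∀ (m : 𝕄) (w : 𝕎), πMhat₀ m w ∈ Set.Ioo (0 : ℝ) 1)
    (hπMhat₁ : ∀ (m : 𝕄) (w : 𝕎), πMhat₁ m w ∈ Set.Ioo (0 : ℝ) 1)
    (bhat : 𝕄 → 𝕎 → ℝ) (ξhat : 𝕎 → ℝ)
    (rhat : 𝕄 → 𝕎 → ℝ)
    (hrhat : ∀ (m : 𝕄) (w : 𝕎),
      rhat m w = (πMhat₁ m w * πhat₀ w) / (πMhat₀ m w * πhat₁ w))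
    (Ψhat : ℝ)
    (hΨhat : Ψhat = ∫ ω,
        ((if A ω = a then (1 : ℝ) else 0) / πhat₀ (W ω)) * rhat (M ω) (W ω)
            * (Y ω - bhat (M ω) (W ω))
          + ((if A ω = a' then (1 : ℝ) else 0) / πhat₁ (W ω))
            * (bhat (M ω) (W ω) - ξhat (W ω))
          + ξhat (W ω) ∂P)
    -- correctness of the outcome regression and sequential regression
    (hcorrect_b : ∀ (m : 𝕄) (w : 𝕎), bhat m w = b m w)
    (hcorrect_ξ : ∀ w : 𝕎, ξhat w = ξ w) :
    Ψhat = ψ := by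
  classical
  obtain ⟨C, hC⟩ := hY_bdd
  set T : Ω → Bool × 𝕄 × 𝕎 := fun ω => (A ω, M ω, W ω) with hTdef
  have hTmeas : Measurable T := hA.prodMk (hM.prodMk hW)
  set E : Bool × 𝕄 × 𝕎 → Set Ω := fun v => T ⁻¹' {v} with hEdef
  have hEmeas : ∀ v, MeasurableSet (E v) := fun v => hTmeas (measurableSet_singleton v)
  have hEeq : ∀ α m w, E (α, m, w) = {ω | A ω = α ∧ M ω = m ∧ W ω = w} := by
    intro α m w; ext ω; simp [hEdef, hTdef, Prod.ext_iff]
  have hdisj : ∀ v v', v ≠ v' → Disjoint (E v) (E v') := by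
    intro v v' hne
    refine Set.disjoint_left.2 fun ω h1 h2 => hne ?_
    have e1 : T ω = v := h1
    have e2 : T ω = v' := h2
    rw [← e1, e2]
  have hEpos : ∀ v, 0 < P (E v) := by
    rintro ⟨α, m, w⟩; rw [hEeq]; exact positivity α m w
  set p : Bool × 𝕄 × 𝕎 → ℝ := fun v => (P (E v)).toReal with hpdef
  have hppos : ∀ v, 0 < p v := fun v => ENNReal.toReal_pos (hEpos v).ne' (measure_ne_top _ _)
  have hYint : Integrable Y P :=
    Integrable.mono' (integrable_const C) hY_meas.aestronglyMeasurable
      (Filter.Eventually.of_forall fun ω => by simpa [Real.norm_eq_abs] using hC ω)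
  -- outcome regression identity
  have hbint : ∀ m w, ∫ ω in E (a, m, w), Y ω ∂P = p (a, m, w) * b m w := by
    intro m w
    have h1 := hb m w
    rw [ProbabilityTheory.cond, ← hEeq, integral_smul_measure, smul_eq_mul,
      ENNReal.toReal_inv] at h1
    have hp := hppos (a, m, w)
    simp only [hpdef] at hp ⊢
    rw [h1]
    field_simp
  -- sequential regression identity
  have hxi : ∀ w, ξ w * (∑ m : 𝕄, p (a', m, w)) = ∑ m : 𝕄, b m w * p (a', m, w) := by
    intro w
    set S : Set Ω := {ω | A ω = a' ∧ W ω = w} with hSdef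
    have hSmeas : MeasurableSet S := by
      have h : S = A ⁻¹' {a'} ∩ W ⁻¹' {w} := by
        ext ω
        simp only [hSdef, Set.mem_setOf_eq, Set.mem_inter_iff, Set.mem_preimage,
          Set.mem_singleton_iff]
      rw [h]; exact (hA (measurableSet_singleton _)).inter (hW (measurableSet_singleton _))
    have hScap : ∀ m : 𝕄, S ∩ {ω | M ω = m} = E (a', m, w) := by
      intro m; rw [hEeq]; ext ω
      simp only [hSdef, Set.mem_inter_iff, Set.mem_setOf_eq]
      tauto
    have hSsum : P S = ∑ m : 𝕄, P (E (a', m, w)) := by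
      have hU : S = ⋃ m ∈ (Finset.univ : Finset 𝕄), E (a', m, w) := by
        ext ω
        simp only [Set.mem_iUnion, Finset.mem_univ, hEeq, hSdef, Set.mem_setOf_eq,
          true_and, exists_and_left, exists_eq']
        tauto
      rw [hU, measure_biUnion_finset]
      · intro m _ m' _ hne
        exact hdisj _ _ (by simp [hne])
      · exact fun m _ => hEmeas _
    have hSne : P S ≠ 0 := by
      rw [hSsum]
      intro h0
      exact absurd (Finset.sum_eq_zero_iff.mp h0 (Classical.arbitrary 𝕄) (Finset.mem_univ _))
        (hEpos (a', Classical.arbitrary 𝕄, w)).ne'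
    have hcondM : ∀ m : 𝕄, ((P[|S]) {ω | M ω = m}).toReal
        = (P S).toReal⁻¹ * p (a', m, w) := by
      intro m
      rw [ProbabilityTheory.cond_apply hSmeas, hScap, ENNReal.toReal_mul, ENNReal.toReal_inv]
    have hST : (P S).toReal = ∑ m : 𝕄, p (a', m, w) := by
      rw [hSsum, ENNReal.toReal_sum (fun m _ => measure_ne_top _ _)]
    have hSpos : 0 < (P S).toReal := ENNReal.toReal_pos hSne (measure_ne_top _ _)
    have h2 := hξ w
    rw [hSdef] at *
    simp only [hcondM] at h2
    rw [← hST]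
    rw [h2]
    rw [Finset.sum_mul]
    refine Finset.sum_congr rfl fun m _ => ?_
    field_simp
  -- marginal of W
  have hWsum : ∀ w, (P {ω | W ω = w}).toReal = ∑ α : Bool, ∑ m : 𝕄, p (α, m, w) := by
    intro w
    have hU : {ω | W ω = w} = ⋃ v ∈ (Finset.univ : Finset (Bool × 𝕄)), E (v.1, v.2, w) := by
      ext ω; simp only [Set.mem_iUnion, Finset.mem_univ, hEeq]
      constructor
      · intro h; exact ⟨(A ω, M ω), trivial, rfl, rfl, h⟩
      · rintro ⟨v, -, -, -, h⟩; exact h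
    rw [hU, measure_biUnion_finset]
    · rw [ENNReal.toReal_sum (fun v _ => measure_ne_top _ _), Fintype.sum_prod_type]
    · intro v _ v' _ hne
      exact hdisj _ _ (by simpa [Prod.ext_iff] using fun h1 h2 => hne (Prod.ext h1 h2))
    · exact fun v _ => hEmeas _
  -- abbreviations for the integrand
  set H : Bool × 𝕄 × 𝕎 → ℝ := fun v =>
    (if v.1 = a then (1 : ℝ) else 0) / πhat₀ v.2.2 * rhat v.2.1 v.2.2 with hHdef
  set G : Bool × 𝕄 × 𝕎 → ℝ := fun v =>
    -(H v * b v.2.1 v.2.2) + (if v.1 = a' then (1 : ℝ) else 0) / πhat₁ v.2.2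
      * (b v.2.1 v.2.2 - ξ v.2.2) + ξ v.2.2 with hGdef
  set f : Ω → ℝ := fun ω => H (T ω) * Y ω + G (T ω) with hfdef
  have hfmeas : Measurable f :=
    (((measurable_of_countable H).comp hTmeas).mul hY_meas).add
      ((measurable_of_countable G).comp hTmeas)
  obtain ⟨D₁, hD₁⟩ : ∃ D, ∀ v, |H v| ≤ D := by
    refine ⟨Finset.univ.sup' Finset.univ_nonempty fun v => |H v|, fun v => ?_⟩
    exact Finset.le_sup' (fun v => |H v|) (Finset.mem_univ v)
  obtain ⟨D₂, hD₂⟩ : ∃ D, ∀ v, |G v| ≤ D := by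
    refine ⟨Finset.univ.sup' Finset.univ_nonempty fun v => |G v|, fun v => ?_⟩
    exact Finset.le_sup' (fun v => |G v|) (Finset.mem_univ v)
  have hfint : Integrable f P := by
    refine Integrable.mono' (integrable_const (D₁ * |C| + D₂)) hfmeas.aestronglyMeasurable
      (Filter.Eventually.of_forall fun ω => ?_)
    have h1 : |H (T ω) * Y ω| ≤ D₁ * |C| := by
      rw [abs_mul]
      exact mul_le_mul (hD₁ (T ω)) ((hC ω).trans (le_abs_self C)) (abs_nonneg _)
        ((abs_nonneg (H (T ω))).trans (hD₁ (T ω)))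
    calc ‖f ω‖ = |H (T ω) * Y ω + G (T ω)| := rfl
      _ ≤ |H (T ω) * Y ω| + |G (T ω)| := abs_add_le _ _
      _ ≤ D₁ * |C| + D₂ := add_le_add h1 (hD₂ _)
  -- step 1: the integrand equals f
  have hintegrand : Ψhat = ∫ ω, f ω ∂P := by
    rw [hΨhat]
    refine integral_congr_ae (Filter.Eventually.of_forall fun ω => ?_)
    simp only [hfdef, hHdef, hGdef, hTdef, hcorrect_b, hcorrect_ξ]
    ring
  -- step 2: decompose over the partition
  have hsplit : ∫ ω, f ω ∂P = ∑ v : Bool × 𝕄 × 𝕎, ∫ ω in E v, f ω ∂P := by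
    have hU : (⋃ v ∈ (Finset.univ : Finset (Bool × 𝕄 × 𝕎)), E v) = Set.univ := by
      ext ω; simp [hEdef]
    rw [← setIntegral_univ, ← hU,
      integral_biUnion_finset Finset.univ (fun v _ => hEmeas v)
        (fun v _ v' _ hne => hdisj v v' hne) (fun v _ => hfint.integrableOn)]
  have hpiece : ∀ v, ∫ ω in E v, f ω ∂P = H v * ∫ ω in E v, Y ω ∂P + G v * p v := by
    intro v
    rw [setIntegral_congr_fun (hEmeas v)
      (g := fun ω => H v * Y ω + G v) (fun ω hω => by
        have hv : T ω = v := hω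
        simp [hfdef, hv])]
    rw [integral_add (hYint.integrableOn.const_mul _)
      (integrableOn_const (measure_ne_top _ _))]
    rw [integral_const_mul, setIntegral_const, smul_eq_mul, mul_comm (P.real (E v))]
    rfl
  -- step 3: evaluate the sum
  rw [hintegrand, hsplit]
  have hterm : ∀ v : Bool × 𝕄 × 𝕎, ∫ ω in E v, f ω ∂P
      = H v * (∫ ω in E v, Y ω ∂P - b v.2.1 v.2.2 * p v)
        + (if v.1 = a' then (πhat₁ v.2.2)⁻¹ * ((b v.2.1 v.2.2 - ξ v.2.2) * p v) else 0)
        + ξ v.2.2 * p v := by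
    intro v
    rw [hpiece v]
    simp only [hGdef]
    split <;> simp <;> ring
  simp only [hterm]
  rw [Finset.sum_add_distrib, Finset.sum_add_distrib]
  have hS1 : ∑ v : Bool × 𝕄 × 𝕎, H v * (∫ ω in E v, Y ω ∂P - b v.2.1 v.2.2 * p v) = 0 := by
    refine Finset.sum_eq_zero fun v _ => ?_
    obtain ⟨α, m, w⟩ := v
    by_cases hα : α = a
    · subst hα
      rw [hbint m w]
      ring
    · simp [hHdef, hα]
  have hS2 : ∑ v : Bool × 𝕄 × 𝕎,
      (if v.1 = a' then (πhat₁ v.2.2)⁻¹ * ((b v.2.1 v.2.2 - ξ v.2.2) * p v) else 0) = 0 := by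
    rw [Fintype.sum_prod_type]
    rw [Finset.sum_comm]
    have : ∀ x : 𝕄 × 𝕎, ∑ α : Bool,
        (if α = a' then (πhat₁ x.2)⁻¹ * ((b x.1 x.2 - ξ x.2) * p (α, x.1, x.2)) else 0)
        = (πhat₁ x.2)⁻¹ * ((b x.1 x.2 - ξ x.2) * p (a', x.1, x.2)) := by
      intro x
      rw [Finset.sum_ite_eq' Finset.univ a'
        (fun α => (πhat₁ x.2)⁻¹ * ((b x.1 x.2 - ξ x.2) * p (α, x.1, x.2)))]
      simp
    simp only [this]
    rw [Fintype.sum_prod_type, Finset.sum_comm]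
    refine Finset.sum_eq_zero fun w _ => ?_
    have e1 : ∑ m : 𝕄, (πhat₁ w)⁻¹ * ((b m w - ξ w) * p (a', m, w))
        = (πhat₁ w)⁻¹ * (∑ m : 𝕄, b m w * p (a', m, w) - ξ w * ∑ m : 𝕄, p (a', m, w)) := by
      rw [← Finset.mul_sum]
      congr 1
      rw [Finset.mul_sum, ← Finset.sum_sub_distrib]
      exact Finset.sum_congr rfl fun m _ => by ring
    rw [e1, ← hxi w]
    ring
  have hS3 : ∑ v : Bool × 𝕄 × 𝕎, ξ v.2.2 * p v = ψ := by
    calc ∑ v : Bool × 𝕄 × 𝕎, ξ v.2.2 * p v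
        = ∑ α : Bool, ∑ m : 𝕄, ∑ w : 𝕎, ξ w * p (α, m, w) := by
          simp only [Fintype.sum_prod_type]
      _ = ∑ α : Bool, ∑ w : 𝕎, ∑ m : 𝕄, ξ w * p (α, m, w) :=
          Finset.sum_congr rfl fun α _ => Finset.sum_comm
      _ = ∑ w : 𝕎, ∑ α : Bool, ∑ m : 𝕄, ξ w * p (α, m, w) := Finset.sum_comm
      _ = ∑ w : 𝕎, (P {ω | W ω = w}).toReal * ξ w := by
          refine Finset.sum_congr rfl fun w _ => ?_
          rw [hWsum w, Finset.sum_mul]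
          refine Finset.sum_congr rfl fun α _ => ?_
          rw [Finset.sum_mul]
          exact Finset.sum_congr rfl fun m _ => mul_comm _ _
      _ = ψ := hψ.symm
  rw [hS1, hS2, hS3]
  ring
end

section
/- The inverse-probability-weighted representation of the mediation functional holds exactly at the true propensities: E[ 1{A = a} / π_A(a | W) · r(M, W) · Ŷ ] = ψ, where ψ = Σ_{w ∈ 𝕎} P(W = w) · Σ_{m ∈ 𝕄} E[Ŷ | A = a, M = m, W = w] · P(M = m | A = a', W = w). (IPW identification of the counterfactual mean of the derived outcome.) -/
open MeasureTheory ProbabilityTheory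
open scoped ENNReal BigOperators

/-- IPW identification of the counterfactual mean of the derived outcome: the
inverse-probability-weighted representation of the mediation functional holds
exactly at the true propensities. -/
theorem ipw_representation
    {Ω : Type*} [MeasurableSpace Ω] (P : Measure Ω) [IsProbabilityMeasure P]
    {𝕄 𝕎 : Type*} [Fintype 𝕄] [Nonempty 𝕄] [MeasurableSpace 𝕄] [MeasurableSingletonClass 𝕄]
    [Fintype 𝕎] [Nonempty 𝕎] [MeasurableSpace 𝕎] [MeasurableSingletonClass 𝕎]
    (A : Ω → Bool) (M : Ω → 𝕄) (W : Ω → 𝕎)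
    (hA : Measurable A) (hM : Measurable M) (hW : Measurable W)
    (positivity : ∀ (α : Bool) (m : 𝕄) (w : 𝕎),
      0 < P {ω | A ω = α ∧ M ω = m ∧ W ω = w})
    (a a' : Bool)
    (Y : Ω → ℝ) (hY_meas : Measurable Y) (hY_bdd : ∃ C : ℝ, ∀ ω, |Y ω| ≤ C)
    (πA : Bool → 𝕎 → ℝ)
    (hπA : ∀ (α : Bool) (w : 𝕎), πA α w = ((P[|{ω | W ω = w}]) {ω | A ω = α}).toReal)
    (πAM : Bool → 𝕄 → 𝕎 → ℝ)
    (hπAM : ∀ (α : Bool) (m : 𝕄) (w : 𝕎),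
      πAM α m w = ((P[|{ω | M ω = m ∧ W ω = w}]) {ω | A ω = α}).toReal)
    (b : 𝕄 → 𝕎 → ℝ)
    (hb : ∀ (m : 𝕄) (w : 𝕎),
      b m w = ∫ ω, Y ω ∂(P[|{ω | A ω = a ∧ M ω = m ∧ W ω = w}]))
    (ξ : 𝕎 → ℝ)
    (hξ : ∀ w : 𝕎,
      ξ w = ∑ m : 𝕄, b m w * ((P[|{ω | A ω = a' ∧ W ω = w}]) {ω | M ω = m}).toReal)
    (r : 𝕄 → 𝕎 → ℝ)
    (hr : ∀ (m : 𝕄) (w : 𝕎),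
      r m w = (πAM a' m w * πA a w) / (πAM a m w * πA a' w))
    (ψ : ℝ) (hψ : ψ = ∑ w : 𝕎, (P {ω | W ω = w}).toReal * ξ w) :
    ∫ ω, ((if A ω = a then (1 : ℝ) else 0) / πA a (W ω)) * r (M ω) (W ω) * Y ω ∂P
      = ψ := by
  classical
  obtain ⟨C, hC⟩ := hY_bdd
  -- basic events
  set E : Bool → 𝕄 → 𝕎 → Set Ω := fun α m w => {ω | A ω = α ∧ M ω = m ∧ W ω = w} with hE
  have hEmeas : ∀ α m w, MeasurableSet (E α m w) := fun α m w =>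
    (hA (measurableSet_singleton α)).inter
      ((hM (measurableSet_singleton m)).inter (hW (measurableSet_singleton w)))
  have hEne : ∀ α m w, P (E α m w) ≠ 0 := fun α m w => (positivity α m w).ne'
  have hEfin : ∀ α m w, P (E α m w) ≠ ∞ := fun α m w => measure_ne_top P _
  -- real-valued atom probabilities
  set p : Bool → 𝕄 → 𝕎 → ℝ := fun α m w => (P (E α m w)).toReal with hp
  have hppos : ∀ α m w, 0 < p α m w := fun α m w =>
    ENNReal.toReal_pos (hEne α m w) (hEfin α m w)
  -- marginal decompositions
  have hW_decomp : ∀ w : 𝕎, P {ω | W ω = w} = ∑ α : Bool, ∑ m : 𝕄, P (E α m w) := by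
    intro w
    have hU : {ω | W ω = w} = ⋃ q : Bool × 𝕄, E q.1 q.2 w := by
      ext ω
      simp only [Set.mem_setOf_eq, Set.mem_iUnion, hE]
      exact ⟨fun h => ⟨⟨A ω, M ω⟩, rfl, rfl, h⟩, fun ⟨q, _, _, h⟩ => h⟩
    have hdisj : Pairwise (Function.onFun Disjoint fun t : Bool × 𝕄 => E t.1 t.2 w) := by
      intro i j hij
      simp only [Function.onFun, Set.disjoint_left, hE]
      rintro ω ⟨h1, h2, _⟩ ⟨h3, h4, _⟩
      exact hij (Prod.ext (h1 ▸ h3) (h2 ▸ h4))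
    rw [hU, measure_iUnion hdisj (fun t : Bool × 𝕄 => hEmeas t.1 t.2 w), tsum_fintype,
      Fintype.sum_prod_type]
  have hMW_decomp : ∀ (m : 𝕄) (w : 𝕎),
      P {ω | M ω = m ∧ W ω = w} = ∑ α : Bool, P (E α m w) := by
    intro m w
    have hU : {ω | M ω = m ∧ W ω = w} = ⋃ α : Bool, E α m w := by
      ext ω
      simp only [Set.mem_setOf_eq, Set.mem_iUnion, hE]
      exact ⟨fun h => ⟨A ω, rfl, h⟩, fun ⟨α, _, h⟩ => h⟩
    have hdisj : Pairwise (Function.onFun Disjoint fun α : Bool => E α m w) := by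
      intro i j hij
      simp only [Function.onFun, Set.disjoint_left, hE]
      rintro ω ⟨h1, _⟩ ⟨h3, _⟩
      exact hij (h1 ▸ h3)
    rw [hU, measure_iUnion hdisj (fun α => hEmeas α m w), tsum_fintype]
  have hAW_decomp : ∀ (α : Bool) (w : 𝕎),
      P {ω | A ω = α ∧ W ω = w} = ∑ m : 𝕄, P (E α m w) := by
    intro α w
    have hU : {ω | A ω = α ∧ W ω = w} = ⋃ m : 𝕄, E α m w := by
      ext ω
      simp only [Set.mem_setOf_eq, Set.mem_iUnion, hE]
      exact ⟨fun h => ⟨M ω, h.1, rfl, h.2⟩, fun ⟨m, h1, _, h3⟩ => ⟨h1, h3⟩⟩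
    have hdisj : Pairwise (Function.onFun Disjoint fun m : 𝕄 => E α m w) := by
      intro i j hij
      simp only [Function.onFun, Set.disjoint_left, hE]
      rintro ω ⟨_, h2, _⟩ ⟨_, h4, _⟩
      exact hij (h2 ▸ h4)
    rw [hU, measure_iUnion hdisj (fun m => hEmeas α m w), tsum_fintype]
  -- real marginals
  set pw : 𝕎 → ℝ := fun w => (P {ω | W ω = w}).toReal with hpw
  set s : 𝕄 → 𝕎 → ℝ := fun m w => (P {ω | M ω = m ∧ W ω = w}).toReal with hs
  set q : Bool → 𝕎 → ℝ := fun α w => (P {ω | A ω = α ∧ W ω = w}).toReal with hq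
  have hpw_sum : ∀ w, pw w = ∑ α : Bool, ∑ m : 𝕄, p α m w := by
    intro w
    rw [hpw]
    simp only [hW_decomp w]
    rw [ENNReal.toReal_sum (fun α _ => ?_)]
    · exact Finset.sum_congr rfl fun α _ =>
        ENNReal.toReal_sum fun m _ => hEfin α m w
    · exact (ENNReal.sum_lt_top.2 fun m _ => (hEfin α m w).lt_top).ne
  have hs_sum : ∀ m w, s m w = ∑ α : Bool, p α m w := by
    intro m w
    rw [hs]
    simp only [hMW_decomp m w]
    exact ENNReal.toReal_sum fun α _ => hEfin α m w
  have hq_sum : ∀ α w, q α w = ∑ m : 𝕄, p α m w := by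
    intro α w
    rw [hq]
    simp only [hAW_decomp α w]
    exact ENNReal.toReal_sum fun m _ => hEfin α m w
  have hpw_pos : ∀ w, 0 < pw w := by
    intro w
    rw [hpw_sum w]
    exact Finset.sum_pos (fun α _ => Finset.sum_pos (fun m _ => hppos α m w)
      Finset.univ_nonempty) Finset.univ_nonempty
  have hs_pos : ∀ m w, 0 < s m w := by
    intro m w
    rw [hs_sum m w]
    exact Finset.sum_pos (fun α _ => hppos α m w) Finset.univ_nonempty
  have hq_pos : ∀ α w, 0 < q α w := by
    intro α w
    rw [hq_sum α w]
    exact Finset.sum_pos (fun m _ => hppos α m w) Finset.univ_nonempty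
  have hWmeas : ∀ w : 𝕎, MeasurableSet {ω | W ω = w} := fun w =>
    hW (measurableSet_singleton w)
  have hMWmeas : ∀ (m : 𝕄) (w : 𝕎), MeasurableSet {ω | M ω = m ∧ W ω = w} := fun m w =>
    (hM (measurableSet_singleton m)).inter (hW (measurableSet_singleton w))
  have hAWmeas : ∀ (α : Bool) (w : 𝕎), MeasurableSet {ω | A ω = α ∧ W ω = w} := fun α w =>
    (hA (measurableSet_singleton α)).inter (hW (measurableSet_singleton w))
  -- propensities in real form
  have hπA_eq : ∀ α w, πA α w = q α w / pw w := by
    intro α w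
    rw [hπA, cond_apply (hWmeas w)]
    have hset : {ω | W ω = w} ∩ {ω | A ω = α} = {ω | A ω = α ∧ W ω = w} := by
      ext ω; simp [Set.mem_inter_iff, and_comm]
    rw [hset, ENNReal.toReal_mul, ENNReal.toReal_inv]
    rw [hq, hpw, inv_mul_eq_div]
  have hπAM_eq : ∀ α m w, πAM α m w = p α m w / s m w := by
    intro α m w
    rw [hπAM, cond_apply (hMWmeas m w)]
    have hset : {ω | M ω = m ∧ W ω = w} ∩ {ω | A ω = α} = E α m w := by
      ext ω
      simp only [Set.mem_inter_iff, Set.mem_setOf_eq, hE]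
      tauto
    rw [hset, ENNReal.toReal_mul, ENNReal.toReal_inv]
    rw [hp, hs, inv_mul_eq_div]
  -- conditional M-probability in real form
  have hcondM : ∀ (m : 𝕄) (w : 𝕎),
      ((P[|{ω | A ω = a' ∧ W ω = w}]) {ω | M ω = m}).toReal = p a' m w / q a' w := by
    intro m w
    rw [cond_apply (hAWmeas a' w)]
    have hset : {ω | A ω = a' ∧ W ω = w} ∩ {ω | M ω = m} = E a' m w := by
      ext ω
      simp only [Set.mem_inter_iff, Set.mem_setOf_eq, hE]
      tauto
    rw [hset, ENNReal.toReal_mul, ENNReal.toReal_inv]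
    rw [hp, hq, inv_mul_eq_div]
  -- integrability of Y
  have hYint : Integrable Y P := by
    refine Integrable.mono' (integrable_const C) hY_meas.aestronglyMeasurable
      (Filter.Eventually.of_forall fun ω => ?_)
    simpa [Real.norm_eq_abs] using hC ω
  -- set integral of Y over atoms
  have hsetint : ∀ m w, ∫ ω in E a m w, Y ω ∂P = p a m w * b m w := by
    intro m w
    rw [hb]
    show _ = p a m w * ∫ ω, Y ω ∂((P (E a m w))⁻¹ • P.restrict (E a m w))
    rw [integral_smul_measure, ENNReal.toReal_inv, smul_eq_mul, ← mul_assoc,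
      mul_inv_cancel₀ (hppos a m w).ne', one_mul]
  -- decomposition of the integral
  set c : Bool → 𝕄 → 𝕎 → ℝ := fun α m w =>
    ((if α = a then (1 : ℝ) else 0) / πA a w) * r m w with hc
  have hfun : (fun ω => ((if A ω = a then (1 : ℝ) else 0) / πA a (W ω)) * r (M ω) (W ω) * Y ω)
      = fun ω => ∑ α : Bool, ∑ m : 𝕄, ∑ w : 𝕎,
          Set.indicator (E α m w) (fun ω' => c α m w * Y ω') ω := by
    funext ω
    rw [Finset.sum_eq_single (A ω)]
    rotate_left
    · intro α _ hα
      apply Finset.sum_eq_zero; intro m _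
      apply Finset.sum_eq_zero; intro w _
      apply Set.indicator_of_notMem
      simp only [hE, Set.mem_setOf_eq]
      exact fun h => hα h.1.symm
    · intro h; exact absurd (Finset.mem_univ _) h
    rw [Finset.sum_eq_single (M ω)]
    rotate_left
    · intro m _ hm
      apply Finset.sum_eq_zero; intro w _
      apply Set.indicator_of_notMem
      simp only [hE, Set.mem_setOf_eq]
      exact fun h => hm h.2.1.symm
    · intro h; exact absurd (Finset.mem_univ _) h
    rw [Finset.sum_eq_single (W ω)]
    rotate_left
    · intro w _ hw
      apply Set.indicator_of_notMem
      simp only [hE, Set.mem_setOf_eq]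
      exact fun h => hw h.2.2.symm
    · intro h; exact absurd (Finset.mem_univ _) h
    rw [Set.indicator_of_mem (by simp [hE])]
  rw [hfun]
  have hind_int : ∀ (α : Bool) (m : 𝕄) (w : 𝕎),
      Integrable (Set.indicator (E α m w) (fun ω' => c α m w * Y ω')) P :=
    fun α m w => ((hYint.const_mul (c α m w)).indicator (hEmeas α m w))
  rw [integral_finset_sum _ fun α _ => (integrable_finset_sum _ fun m _ =>
    integrable_finset_sum _ fun w _ => hind_int α m w)]
  have : ∀ α : Bool, ∫ ω, (∑ m : 𝕄, ∑ w : 𝕎,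
      Set.indicator (E α m w) (fun ω' => c α m w * Y ω') ω) ∂P
      = ∑ m : 𝕄, ∑ w : 𝕎, c α m w * ∫ ω in E α m w, Y ω ∂P := by
    intro α
    rw [integral_finset_sum _ fun m _ =>
      integrable_finset_sum _ fun w _ => hind_int α m w]
    refine Finset.sum_congr rfl fun m _ => ?_
    rw [integral_finset_sum _ fun w _ => hind_int α m w]
    refine Finset.sum_congr rfl fun w _ => ?_
    rw [integral_indicator (hEmeas α m w), integral_const_mul]
  simp only [this]
  -- kill the α ≠ a terms
  have hczero : ∀ m w, ∀ α : Bool, α ≠ a → c α m w = 0 := by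
    intro m w α hα
    simp [hc, hα]
  rw [Fintype.sum_eq_single a (fun α hα => Finset.sum_eq_zero fun m _ =>
    Finset.sum_eq_zero fun w _ => by rw [hczero m w α hα, zero_mul])]
  -- now pure algebra
  rw [hψ]
  rw [Finset.sum_comm]
  refine Finset.sum_congr rfl fun w _ => ?_
  rw [hξ w, Finset.mul_sum]
  refine Finset.sum_congr rfl fun m _ => ?_
  rw [hsetint m w, hcondM m w]
  simp only [hc, hr, hπA_eq, hπAM_eq, if_pos rfl]
  have h1 := (hppos a m w).ne'
  have h2 := (hppos a' m w).ne'
  have h3 := (hs_pos m w).ne'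
  have h4 := (hq_pos a w).ne'
  have h5 := (hq_pos a' w).ne'
  have h6 := (hpw_pos w).ne'
  show (1 / (q a w / pw w)) *
      ((p a' m w / s m w * (q a w / pw w)) / (p a m w / s m w * (q a' w / pw w)))
      * (p a m w * b m w) = (P {ω | W ω = w}).toReal * (b m w * (p a' m w / q a' w))
  rw [show (P {ω | W ω = w}).toReal = pw w from rfl]
  field_simp
end
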